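/- arXiv:2202.06450 — 9 statements merged into one kernel-verified Lean document; each statement's English description precedes it below -/
import Mathlib

section
/- There exists an absolute constant c > 0 (independent of c_K, d, H and ε) with the following property. Let d, H, N, K be positive integers, let ε ∈ (0,1), and let c_K ≥ 2 be an integer such that K = c_K·d·H + 1 and N ≥ c·(c_K · H · d^{c_K} · ε^{-c_K} · (log(H·d/ε))^{c_K})^{1/(c_K−1)}. Let φ_1, …, φ_{K·N} ∈ ℝ^d satisfy ‖φ_t‖ ≤ 1 for all t; for k = 1,…,K set Φ_{k−1} = Σ_{t=(k−1)N+1}^{kN} φ_t φ_tᵀ, and define real d×d matrices by A_0 = I and A_{kN} = A_{(k−1)N} + Φ_{k−1}. Then each A_{(k−1)N} is positive definite, and the set K⁺ = {k ∈ {1,…,K} : Tr(A_{(k−1)N}^{-1} Φ_{k−1}) ≥ N·ε} satisfies |K⁺| ≤ c_K·d, and moreover c_K·d < K/H. -/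
open Matrix


section EllipticalAux

variable {d : ℕ}

lemma aux_psd (v : Fin d → ℝ) : (vecMulVec v v).PosSemidef := by
  have h := Matrix.posSemidef_conjTranspose_mul_self (Matrix.replicateRow Unit v)
  rwa [Matrix.conjTranspose_replicateRow, star_trivial, ← Matrix.vecMulVec_eq Unit] at h

lemma aux_trace_vmv (v : Fin d → ℝ) : (vecMulVec v v).trace = ∑ i, v i * v i := by
  simp [Matrix.trace, Matrix.diag, vecMulVec_apply]

lemma aux_one_add_sum_le_prod {ι : Type*} {s : Finset ι} {f : ι → ℝ}
    (hf : ∀ i ∈ s, 0 ≤ f i) : 1 + ∑ i ∈ s, f i ≤ ∏ i ∈ s, (1 + f i) := by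
  classical
  induction s using Finset.cons_induction with
  | empty => simp
  | cons a s ha ih =>
    rw [Finset.prod_cons, Finset.sum_cons]
    have h1 : 0 ≤ f a := hf a (Finset.mem_cons_self a s)
    have h2 : ∀ i ∈ s, 0 ≤ f i := fun i hi => hf i (Finset.mem_cons_of_mem hi)
    have h3 := ih h2
    have h4 : 0 ≤ ∑ i ∈ s, f i := Finset.sum_nonneg h2
    nlinarith

lemma aux_quad_binom (x : ℝ) (hx : 0 ≤ x) :
    ∀ n : ℕ, 1 + (n + 1 : ℝ) * x + ((n + 1 : ℝ) * n / 2) * x ^ 2 ≤ (1 + x) ^ (n + 1)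
  | 0 => by norm_num
  | (n + 1) => by
    have ih := aux_quad_binom x hx n
    push_cast
    calc 1 + ((n:ℝ) + 1 + 1) * x + (((n:ℝ) + 1 + 1) * ((n:ℝ) + 1) / 2) * x ^ 2
        ≤ (1 + x) * (1 + ((n:ℝ) + 1) * x + (((n:ℝ) + 1) * n / 2) * x ^ 2) := by nlinarith [mul_nonneg ((Nat.cast_nonneg n : (0:ℝ) ≤ n)) (pow_nonneg hx 3), pow_nonneg hx 3]
      _ ≤ (1 + x) * (1 + x) ^ (n + 1) := by
          exact mul_le_mul_of_nonneg_left ih (by linarith)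
      _ = (1 + x) ^ (n + 1 + 1) := by ring

lemma aux_trace_eigen {A : Matrix (Fin d) (Fin d) ℝ} (hA : A.IsHermitian) :
    A.trace = ∑ i, hA.eigenvalues i := by
  nth_rewrite 1 [hA.spectral_theorem]
  rw [Unitary.conjStarAlgAut_apply]
  rw [Matrix.trace_mul_cycle]
  rw [Matrix.mem_unitaryGroup_iff'.mp (hA.eigenvectorUnitary).2, one_mul]
  simp [Matrix.trace_diagonal]

lemma aux_det_one_add {M : Matrix (Fin d) (Fin d) ℝ} (hM : M.PosSemidef) :
    1 + M.trace ≤ (1 + M).det := by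
  have hH := hM.isHermitian
  have key : (1 : Matrix (Fin d) (Fin d) ℝ) + M =
      (hH.eigenvectorUnitary : Matrix (Fin d) (Fin d) ℝ) *
        (1 + diagonal (RCLike.ofReal ∘ hH.eigenvalues)) *
        (star (hH.eigenvectorUnitary : Matrix (Fin d) (Fin d) ℝ)) := by
    rw [mul_add, add_mul, mul_one, Matrix.mem_unitaryGroup_iff.mp (hH.eigenvectorUnitary).2]
    congr 1
    exact hH.spectral_theorem
  rw [key, det_mul, det_mul, mul_comm, ← mul_assoc, ← det_mul, ← det_mul,
    Matrix.mem_unitaryGroup_iff'.mp (hH.eigenvectorUnitary).2, one_mul]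
  have h1 : (1 : Matrix (Fin d) (Fin d) ℝ) + diagonal (RCLike.ofReal ∘ hH.eigenvalues) =
      diagonal (fun i => 1 + hH.eigenvalues i) := by
    rw [← Matrix.diagonal_one, Matrix.diagonal_add]
    rfl
  rw [h1, det_diagonal, aux_trace_eigen hH]
  exact aux_one_add_sum_le_prod (fun i _ => hM.eigenvalues_nonneg i)

open scoped MatrixOrder in
lemma aux_key_facts {P Q : Matrix (Fin d) (Fin d) ℝ} (hP : P.PosDef) (hQ : Q.PosSemidef) :
    P.det * (1 + (P⁻¹ * Q).trace) ≤ (P + Q).det ∧ 0 ≤ (P⁻¹ * Q).trace := by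
  have hPsd := hP.posSemidef
  set S := CFC.sqrt P with hSdef
  have hSpsd : S.PosSemidef := (CFC.sqrt_nonneg P).posSemidef
  have hSS : S * S = P := CFC.sqrt_mul_sqrt_self P hPsd.nonneg
  have hdetP : 0 < P.det := hP.det_pos
  have hdetS : S.det ≠ 0 := by
    intro h
    rw [← hSS, det_mul, h, mul_zero] at hdetP
    exact lt_irrefl _ hdetP
  have hSH : Sᴴ = S := hSpsd.isHermitian
  have hSinvH : (S⁻¹)ᴴ = S⁻¹ := by rw [Matrix.conjTranspose_nonsing_inv, hSH]
  set M := S⁻¹ * Q * S⁻¹ with hMdef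
  have hMpsd : M.PosSemidef := by
    have := hQ.mul_mul_conjTranspose_same S⁻¹
    rwa [hSinvH] at this
  have hPinv : S⁻¹ * S⁻¹ = P⁻¹ := by rw [← Matrix.mul_inv_rev, hSS]
  have htr : M.trace = (P⁻¹ * Q).trace := by
    rw [hMdef, Matrix.trace_mul_cycle, hPinv]
  have hdecomp : P + Q = S * (1 + M) * S := by
    rw [hMdef, mul_add, add_mul, mul_one, hSS]
    congr 1
    rw [← mul_assoc, ← mul_assoc, Matrix.mul_nonsing_inv _ (isUnit_iff_ne_zero.mpr hdetS),
      one_mul, mul_assoc, Matrix.nonsing_inv_mul _ (isUnit_iff_ne_zero.mpr hdetS), mul_one]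
  have hdet2 : (P + Q).det = P.det * (1 + M).det := by
    rw [hdecomp, det_mul, det_mul, mul_right_comm, ← det_mul, hSS]
  refine ⟨?_, ?_⟩
  · rw [hdet2, ← htr]
    exact mul_le_mul_of_nonneg_left (aux_det_one_add hMpsd) hdetP.le
  · rw [← htr, aux_trace_eigen hMpsd.isHermitian]
    exact Finset.sum_nonneg fun i _ => hMpsd.eigenvalues_nonneg i

lemma aux_det_le_pow {A : Matrix (Fin d) (Fin d) ℝ} (hd : 0 < d) (hA : A.PosDef) :
    A.det ≤ (A.trace / d) ^ d := by
  have hH := hA.isHermitian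
  have hev : ∀ i ∈ Finset.univ, (0:ℝ) ≤ hH.eigenvalues i :=
    fun i _ => (hA.posSemidef.eigenvalues_nonneg i)
  have hw : ∀ i ∈ (Finset.univ : Finset (Fin d)), (0:ℝ) ≤ (1 : Fin d → ℝ) i := by
    intro i _; norm_num
  have hsum : ∑ _i ∈ (Finset.univ : Finset (Fin d)), ((1 : Fin d → ℝ) _i) = (d : ℝ) := by
    simp
  have hpos : (0:ℝ) < ∑ _i ∈ (Finset.univ : Finset (Fin d)), ((1 : Fin d → ℝ) _i) := by
    rw [hsum]; exact_mod_cast hd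
  have key := Real.geom_mean_le_arith_mean (Finset.univ : Finset (Fin d)) 1 hH.eigenvalues
    hw hpos hev
  rw [hsum] at key
  simp only [Pi.one_apply, Real.rpow_one, one_mul] at key
  have hprod : (0:ℝ) ≤ ∏ i, hH.eigenvalues i := Finset.prod_nonneg hev
  have h2 : ((∏ i, hH.eigenvalues i) ^ ((d:ℝ)⁻¹)) ^ d ≤ ((∑ i, hH.eigenvalues i) / d) ^ d :=
    pow_le_pow_left₀ (Real.rpow_nonneg hprod _) key d
  rw [← Real.rpow_natCast (_ ^ ((d:ℝ)⁻¹)) d, ← Real.rpow_mul hprod,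
    inv_mul_cancel₀ (by exact_mod_cast hd.ne' : (d:ℝ) ≠ 0), Real.rpow_one] at h2
  rw [hH.det_eq_prod_eigenvalues, aux_trace_eigen hH]
  exact_mod_cast h2

set_option maxHeartbeats 1000000 in
lemma aux_numeric (d H N cK : ℕ) (hd : 0 < d) (hH : 0 < H) (hN : 0 < N) (hcK : 2 ≤ cK)
    (ε : ℝ) (hε0 : 0 < ε) (hε1 : ε < 1)
    (hNge : (N : ℝ) ≥ 30 * (((cK : ℝ) * H * (d : ℝ) ^ cK * ε ^ (-(cK : ℤ)) *
      Real.log ((H : ℝ) * d / ε) ^ cK) ^ ((1 : ℝ) / ((cK : ℝ) - 1)))) :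
    (((d : ℝ) + ((cK : ℝ) * d * H + 1) * N) / d) ^ d < (1 + (N : ℝ) * ε) ^ (cK * d + 1) := by
  have hd1 : (1:ℝ) ≤ d := by exact_mod_cast hd
  have hH1 : (1:ℝ) ≤ H := by exact_mod_cast hH
  have hN1 : (1:ℝ) ≤ N := by exact_mod_cast hN
  have hcK2 : (2:ℝ) ≤ cK := by exact_mod_cast hcK
  set L := Real.log ((H : ℝ) * d / ε) with hLdef
  have hL0 : 0 < L := by
    apply Real.log_pos
    have h1 : (1:ℝ) ≤ (H:ℝ) * d := by nlinarith
    rw [lt_div_iff₀ hε0]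
    nlinarith
  have hεpow : (0:ℝ) < ε ^ cK := pow_pos hε0 cK
  have hzpow : ε ^ (-(cK : ℤ)) = (ε ^ cK)⁻¹ := by
    rw [_root_.zpow_neg, zpow_natCast]
  set Y := (cK : ℝ) * H * (d : ℝ) ^ cK * ε ^ (-(cK : ℤ)) * L ^ cK with hYdef
  have hY0 : 0 < Y := by
    rw [hYdef, hzpow]
    positivity
  have hcast : ((cK - 1 : ℕ) : ℝ) = (cK : ℝ) - 1 := by
    rw [Nat.cast_sub (by omega)]; norm_num
  have hXpow : (Y ^ ((1 : ℝ) / ((cK : ℝ) - 1))) ^ (cK - 1 : ℕ) = Y := by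
    rw [← Real.rpow_natCast (Y ^ ((1 : ℝ) / ((cK : ℝ) - 1))) (cK - 1), ← Real.rpow_mul hY0.le,
      hcast, one_div, inv_mul_cancel₀ (by linarith), Real.rpow_one]
  have hNpow : 30 ^ (cK - 1 : ℕ) * Y ≤ (N : ℝ) ^ (cK - 1 : ℕ) := by
    calc 30 ^ (cK - 1 : ℕ) * Y
        = (30 * Y ^ ((1 : ℝ) / ((cK : ℝ) - 1))) ^ (cK - 1 : ℕ) := by
          rw [mul_pow, hXpow]
      _ ≤ (N : ℝ) ^ (cK - 1 : ℕ) := pow_le_pow_left₀ (by positivity) hNge (cK - 1)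
  have hNE : 30 ^ (cK - 1 : ℕ) * ((cK : ℝ) * H * ((d : ℝ) * L) ^ cK)
      ≤ (N : ℝ) ^ (cK - 1 : ℕ) * ε ^ cK := by
    have h := mul_le_mul_of_nonneg_right hNpow hεpow.le
    calc 30 ^ (cK - 1 : ℕ) * ((cK : ℝ) * H * ((d : ℝ) * L) ^ cK)
        = 30 ^ (cK - 1 : ℕ) * Y * ε ^ cK := by
          rw [hYdef, hzpow, mul_pow]
          field_simp
      _ ≤ (N : ℝ) ^ (cK - 1 : ℕ) * ε ^ cK := h
  have hbase : (0:ℝ) < 1 + (N : ℝ) * ε := by positivity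
  have hcHN : (1:ℝ) ≤ (cK : ℝ) * H * N := by
    calc (1:ℝ) = 1 * 1 * 1 := by norm_num
    _ ≤ (cK : ℝ) * H * N := by gcongr <;> linarith
  by_cases h1 : (3:ℝ) ≤ 30 ^ (cK - 1 : ℕ) * ((d : ℝ) * L) ^ cK
  · -- main case
    have key : 1 + 2 * (cK : ℝ) * H * N ≤ (1 + (N : ℝ) * ε) ^ cK := by
      have e1 : ((N : ℝ) * ε) ^ cK = (N : ℝ) * ((N : ℝ) ^ (cK - 1 : ℕ) * ε ^ cK) := by
        rw [mul_pow, ← mul_assoc]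
        congr 1
        rw [← pow_succ']
        congr 1
        omega
      have e2 : (N : ℝ) * (30 ^ (cK - 1 : ℕ) * ((cK : ℝ) * H * ((d : ℝ) * L) ^ cK))
          ≤ ((N : ℝ) * ε) ^ cK := by
        rw [e1]
        exact mul_le_mul_of_nonneg_left hNE (by linarith)
      have e3 : (N : ℝ) * (3 * ((cK : ℝ) * H))
          ≤ (N : ℝ) * (30 ^ (cK - 1 : ℕ) * ((d : ℝ) * L) ^ cK * ((cK : ℝ) * H)) := by
        have : (3:ℝ) * ((cK : ℝ) * H) ≤ 30 ^ (cK - 1 : ℕ) * ((d : ℝ) * L) ^ cK * ((cK : ℝ) * H) :=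
          mul_le_mul_of_nonneg_right h1 (by positivity)
        nlinarith [this]
      have e4 : ((N : ℝ) * ε) ^ cK ≤ (1 + (N : ℝ) * ε) ^ cK :=
        pow_le_pow_left₀ (by positivity) (by linarith) cK
      nlinarith [e2, e3, e4, hcHN]
    have base_bound : ((d : ℝ) + ((cK : ℝ) * d * H + 1) * N) / d ≤ 1 + 2 * (cK : ℝ) * H * N := by
      rw [div_le_iff₀ (by linarith)]
      have e6 : (N:ℝ) * 1 * 1 ≤ (N : ℝ) * ((cK : ℝ) * H) * d := by gcongr <;> nlinarith
      nlinarith [e6]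
    calc (((d : ℝ) + ((cK : ℝ) * d * H + 1) * N) / d) ^ d
        ≤ ((1 + (N : ℝ) * ε) ^ cK) ^ d :=
          pow_le_pow_left₀ (by positivity) (base_bound.trans key) d
      _ = (1 + (N : ℝ) * ε) ^ (cK * d) := by rw [← pow_mul]
      _ < (1 + (N : ℝ) * ε) ^ (cK * d + 1) := by
          rw [pow_succ]
          exact lt_mul_of_one_lt_right (pow_pos hbase (cK * d)) (by nlinarith)
  · push_neg at h1
    have hdL : (d : ℝ) * L < 1/3 := by
      by_contra hcon
      push_neg at hcon
      have h2 : ((1:ℝ)/3) ^ cK ≤ ((d : ℝ) * L) ^ cK := pow_le_pow_left₀ (by norm_num) hcon cK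
      have e : (30:ℝ) ^ (cK - 1 : ℕ) * ((1:ℝ)/3) ^ cK = 10 ^ (cK - 1 : ℕ) * (1/3) := by
        have hck : cK = (cK - 1) + 1 := by omega
        rw [hck]
        have : cK - 1 + 1 - 1 = cK - 1 := by omega
        rw [this, pow_succ, ← mul_assoc, ← mul_pow]
        norm_num
      have h10 : (10:ℝ) ≤ 10 ^ (cK - 1 : ℕ) := le_self_pow₀ (by norm_num) (by omega)
      nlinarith [mul_le_mul_of_nonneg_left h2 (show (0:ℝ) ≤ 30 ^ (cK - 1 : ℕ) by positivity)]
    -- now d = H = 1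
    have hHd : H * d = 1 := by
      by_contra hcon
      have h2 : 2 ≤ H * d := by
        have := Nat.mul_pos hH hd
        omega
      have h2' : (2:ℝ) ≤ (H:ℝ) * d := by exact_mod_cast h2
      have hL2 : Real.log 2 < L := by
        rw [hLdef]
        apply Real.log_lt_log (by norm_num)
        rw [lt_div_iff₀ hε0]
        nlinarith
      have := Real.log_two_gt_d9
      nlinarith
    have hH' : H = 1 := Nat.eq_one_of_mul_eq_one_right (by rwa [Nat.mul_comm] at hHd)
    have hd' : d = 1 := Nat.eq_one_of_mul_eq_one_left (by rwa [Nat.mul_comm] at hHd)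
    subst hH' hd'
    simp only [Nat.cast_one, mul_one, one_mul] at hdL hLdef ⊢
    -- L = log (1/ε)
    have hLε : L = -Real.log ε := by rw [hLdef, one_div, Real.log_inv]
    have h1ε : 1 - ε ≤ L := by
      have := Real.log_le_sub_one_of_pos hε0
      rw [hLε]; linarith
    have hεlb : Real.exp (-(1/3)) < ε := by
      have : Real.log ε > -(1/3) := by rw [hLε] at hdL; linarith
      calc Real.exp (-(1/3)) < Real.exp (Real.log ε) := Real.exp_lt_exp.mpr this
        _ = ε := Real.exp_log hε0
    have hε2 : (1:ℝ)/3 < ε ^ 2 := by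
      have e1 : Real.exp (-(1/3)) ^ 2 = Real.exp (-(2/3)) := by
        rw [← Real.exp_nat_mul]
        norm_num
      have e2 : (1:ℝ)/3 < Real.exp (-(2/3)) := by
        have := Real.add_one_lt_exp (show (-(2/3) : ℝ) ≠ 0 by norm_num)
        linarith
      calc (1:ℝ)/3 < Real.exp (-(2/3)) := e2
        _ = Real.exp (-(1/3)) ^ 2 := e1.symm
        _ < ε ^ 2 := by
            apply pow_lt_pow_left₀ hεlb (Real.exp_pos _).le
            norm_num
    -- final
    have hquad := aux_quad_binom ((N:ℝ) * ε) (by positivity) cK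
    have hkey : 1 - ε < (cK : ℝ) * N * ε ^ 2 / 2 := by
      have h2cKN : (2:ℝ) ≤ (cK:ℝ) * N := by nlinarith
      have h3 : ε ^ 2 * 2 ≤ ε ^ 2 * ((cK:ℝ) * N) :=
        mul_le_mul_of_nonneg_left h2cKN (sq_nonneg ε)
      linarith
    have hgoal : 1 + ((cK : ℝ) + 1) * N < (1 + (N:ℝ) * ε) ^ (cK + 1) := by
      calc 1 + ((cK : ℝ) + 1) * N
          < 1 + ((cK:ℝ) + 1) * ((N:ℝ) * ε) + (((cK:ℝ) + 1) * cK / 2) * ((N:ℝ) * ε) ^ 2 := by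
            nlinarith [hkey, mul_pos (show (0:ℝ) < (cK:ℝ)+1 by linarith) (show (0:ℝ) < N by linarith)]
        _ ≤ (1 + (N:ℝ) * ε) ^ (cK + 1) := hquad
    calc (((1:ℝ) + ((cK : ℝ) + 1) * ↑N) / 1) ^ 1 = 1 + ((cK : ℝ) + 1) * N := by ring
      _ < (1 + (N:ℝ) * ε) ^ (cK + 1) := hgoal

end EllipticalAux

/-- Batched finite-sample elliptical potential lemma: there is an absolute constant
`c > 0` such that whenever `K = c_K d H + 1` with `c_K ≥ 2` and
`N ≥ c (c_K H d^{c_K} ε^{-c_K} log^{c_K}(Hd/ε))^{1/(c_K-1)}`, for any batch of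
feature vectors of norm at most `1` with `A_0 = I`, `A_{k+1} = A_k + Φ_k`, each `A_k`
is positive definite, and the number of batches `k < K` with `Tr(A_k⁻¹ Φ_k) ≥ N ε`
is at most `c_K d`, which is moreover less than `K / H`. -/
theorem batched_finite_sample_elliptical_potential :
    ∃ c : ℝ, 0 < c ∧
      ∀ (d H N K cK : ℕ), 0 < d → 0 < H → 0 < N → 0 < K →
        2 ≤ cK →
        K = cK * d * H + 1 →
        ∀ ε : ℝ, 0 < ε → ε < 1 →
        (N : ℝ) ≥ c * (((cK : ℝ) * H * (d : ℝ) ^ cK * ε ^ (-(cK : ℤ)) *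
            Real.log ((H : ℝ) * d / ε) ^ cK) ^ ((1 : ℝ) / ((cK : ℝ) - 1))) →
        ∀ φ : ℕ → EuclideanSpace ℝ (Fin d),
          (∀ t < K * N, ‖φ t‖ ≤ 1) →
        ∀ A : ℕ → Matrix (Fin d) (Fin d) ℝ,
          A 0 = 1 →
          (∀ k, A (k + 1) = A k + ∑ t ∈ Finset.Ico (k * N) ((k + 1) * N),
              vecMulVec (φ t) (φ t)) →
          (∀ k < K, (A k).PosDef) ∧
          ({k : ℕ | k < K ∧ (N : ℝ) * ε ≤
              Matrix.trace ((A k)⁻¹ * ∑ t ∈ Finset.Ico (k * N) ((k + 1) * N),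
                vecMulVec (φ t) (φ t))}.ncard ≤ cK * d) ∧
          ((cK * d : ℕ) : ℝ) < (K : ℝ) / (H : ℝ) := by
  refine ⟨30, by norm_num, ?_⟩
  intro d H N K cK hd hH hN hK hcK hKeq ε hε0 hε1 hNge φ hφ A hA0 hArec
  classical
  set Φ : ℕ → Matrix (Fin d) (Fin d) ℝ :=
    fun k => ∑ t ∈ Finset.Ico (k * N) ((k + 1) * N), vecMulVec (φ t) (φ t) with hΦ
  have hΦpsd : ∀ k, (Φ k).PosSemidef := fun k =>
    Finset.sum_induction _ _ (fun a b ha hb => ha.add hb) .zero (fun t _ => aux_psd (φ t))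
  have hApos : ∀ k, (A k).PosDef := by
    intro k; induction k with
    | zero => rw [hA0]; exact Matrix.PosDef.one
    | succ k ih => rw [hArec k]; exact ih.add_posSemidef (hΦpsd k)
  set tr : ℕ → ℝ := fun k => ((A k)⁻¹ * Φ k).trace with htrdef
  have htr0 : ∀ k, 0 ≤ tr k := fun k => (aux_key_facts (hApos k) (hΦpsd k)).2
  have hdetprod : ∀ j, ∏ k ∈ Finset.range j, (1 + tr k) ≤ (A j).det := by
    intro j; induction j with
    | zero => simp [hA0]
    | succ j ih =>
      rw [Finset.prod_range_succ]
      calc (∏ k ∈ Finset.range j, (1 + tr k)) * (1 + tr j)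
          ≤ (A j).det * (1 + tr j) :=
            mul_le_mul_of_nonneg_right ih (by linarith [htr0 j])
        _ ≤ (A (j+1)).det := by
            rw [hArec j]; exact (aux_key_facts (hApos j) (hΦpsd j)).1
  have hAeq : ∀ j, A j = 1 + ∑ t ∈ Finset.range (j * N), vecMulVec (φ t) (φ t) := by
    intro j; induction j with
    | zero => simp [hA0]
    | succ j ih =>
      rw [hArec j, ih, add_assoc]
      congr 1
      rw [Finset.range_eq_Ico, Finset.range_eq_Ico]
      exact Finset.sum_Ico_consecutive (fun t => vecMulVec (φ t) (φ t)) (Nat.zero_le (j * N))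
          (Nat.mul_le_mul_right N (Nat.le_succ j))
  have htracebd : (A K).trace ≤ (d : ℝ) + (K : ℝ) * N := by
    rw [hAeq K, Matrix.trace_add, Matrix.trace_one]
    have hcard : ((Finset.range (K * N)).card : ℝ) = (K : ℝ) * N := by
      rw [Finset.card_range]; push_cast; ring
    have hsum : (∑ t ∈ Finset.range (K * N), vecMulVec (φ t) (φ t)).trace
        ≤ (K : ℝ) * N := by
      rw [Matrix.trace_sum]
      calc ∑ t ∈ Finset.range (K * N), (vecMulVec (φ t) (φ t)).trace
          ≤ ∑ _t ∈ Finset.range (K * N), (1:ℝ) := by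
            apply Finset.sum_le_sum
            intro t ht
            rw [aux_trace_vmv]
            have hnorm : ‖φ t‖ ^ 2 = ∑ i, φ t i * φ t i := by
              rw [EuclideanSpace.norm_eq,
                Real.sq_sqrt (Finset.sum_nonneg fun i _ => sq_nonneg _)]
              exact Finset.sum_congr rfl fun i _ => by
                rw [Real.norm_eq_abs, sq_abs]; ring
            rw [← hnorm]
            have := hφ t (Finset.mem_range.mp ht)
            nlinarith [norm_nonneg (φ t)]
        _ = (K : ℝ) * N := by
            rw [Finset.sum_const, nsmul_eq_mul, Finset.card_range]; push_cast; ring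
    simp only [Fintype.card_fin]
    linarith
  have htrA0 : 0 ≤ (A K).trace := by
    rw [aux_trace_eigen (hApos K).isHermitian]
    exact Finset.sum_nonneg fun i _ => (hApos K).posSemidef.eigenvalues_nonneg i
  have hdetK : (A K).det ≤ (((d : ℝ) + (K : ℝ) * N) / d) ^ d := by
    calc (A K).det ≤ ((A K).trace / d) ^ d := aux_det_le_pow hd (hApos K)
      _ ≤ (((d : ℝ) + (K : ℝ) * N) / d) ^ d := by
          apply pow_le_pow_left₀ (div_nonneg htrA0 (Nat.cast_nonneg d)) _ d
          gcongr
  have hdpos : (0:ℝ) < 1 + (N:ℝ) * ε := by positivity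
  set F := (Finset.range K).filter (fun k => (N : ℝ) * ε ≤ tr k) with hF
  have hm : ((1:ℝ) + (N:ℝ) * ε) ^ F.card ≤ (A K).det := by
    have split := Finset.prod_filter_mul_prod_filter_not (Finset.range K)
      (fun k => (N : ℝ) * ε ≤ tr k) (fun k => 1 + tr k)
    calc ((1:ℝ) + (N:ℝ) * ε) ^ F.card ≤ ∏ k ∈ F, (1 + tr k) := by
          rw [← Finset.prod_const]
          apply Finset.prod_le_prod (fun k _ => by positivity)
          intro k hk
          have := (Finset.mem_filter.mp hk).2
          linarith
      _ ≤ ∏ k ∈ Finset.range K, (1 + tr k) := by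
          rw [← split]
          apply le_mul_of_one_le_right
            (Finset.prod_nonneg fun k _ => by linarith [htr0 k])
          calc (1:ℝ) = ∏ _k ∈ (Finset.range K).filter (fun k => ¬ ((N : ℝ) * ε ≤ tr k)), 1 :=
                Finset.prod_const_one.symm
            _ ≤ _ := Finset.prod_le_prod (fun k _ => zero_le_one)
                (fun k _ => by linarith [htr0 k])
      _ ≤ (A K).det := hdetprod K
  have hnum := aux_numeric d H N cK hd hH hN hcK ε hε0 hε1 hNge
  have hKcast : ((K : ℕ) : ℝ) = (cK : ℝ) * d * H + 1 := by
    rw [hKeq]; push_cast; ring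
  rw [hKcast] at hdetK
  have hcard : F.card ≤ cK * d := by
    by_contra hcon
    push_neg at hcon
    have h1 : ((1:ℝ) + (N:ℝ) * ε) ^ (cK * d + 1) ≤ ((1:ℝ) + (N:ℝ) * ε) ^ F.card :=
      pow_le_pow_right₀ (by nlinarith) (by omega)
    linarith [hm, hdetK, hnum]
  refine ⟨fun k _ => hApos k, ?_, ?_⟩
  · have hsetF : {k : ℕ | k < K ∧ (N : ℝ) * ε ≤
        Matrix.trace ((A k)⁻¹ * ∑ t ∈ Finset.Ico (k * N) ((k + 1) * N),
          vecMulVec (φ t) (φ t))} = ↑F := by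
      ext k
      simp only [hF, Set.mem_setOf_eq, Finset.coe_filter, Finset.mem_range, htrdef, hΦ]
    rw [hsetF, Set.ncard_coe_finset]
    exact hcard
  · rw [hKcast, lt_div_iff₀ (Nat.cast_pos.mpr hH)]
    push_cast
    nlinarith [(Nat.cast_pos (α := ℝ)).mpr hd, (Nat.cast_pos (α := ℝ)).mpr hH]
end

section
/- Let d, K, N be positive integers and ε > 0. Let φ_1, …, φ_{K·N} ∈ ℝ^d satisfy ‖φ_t‖ ≤ 1 for all t; for k = 1,…,K set Φ_{k−1} = Σ_{t=(k−1)N+1}^{kN} φ_t φ_tᵀ, and define A_0 = I and A_{kN} = A_{(k−1)N} + Φ_{k−1}. Let K⁺ = {k ∈ {1,…,K} : Tr(A_{(k−1)N}^{-1} Φ_{k−1}) ≥ N·ε}. If N·ε ≥ d·log(1 + K·N/d), then |K⁺| · log( N·ε / (d·log(1 + K·N/d)) ) ≤ d·log(1 + K·N/d). -/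
open Matrix Finset

set_option linter.unusedSectionVars false

section aux
variable {n : Type*} [Fintype n] [DecidableEq n]

lemma myprod_one_add (s : Finset n) (μ : n → ℝ) (h : ∀ i, 0 ≤ μ i) :
    1 + ∑ i ∈ s, μ i ≤ ∏ i ∈ s, (1 + μ i) := by
  classical
  induction s using Finset.induction with
  | empty => simp
  | @insert a s hx ih =>
    rw [Finset.sum_insert hx, Finset.prod_insert hx]
    have h1 : (0:ℝ) ≤ ∑ i ∈ s, μ i := Finset.sum_nonneg fun i _ => h i
    nlinarith [h a]

lemma mytrace_eq_sum_eigenvalues {A : Matrix n n ℝ} (hA : A.IsHermitian) :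
    A.trace = ∑ i, hA.eigenvalues i := by
  conv_lhs => rw [hA.spectral_theorem, Unitary.conjStarAlgAut_apply]
  rw [Matrix.trace_mul_cycle]
  rw [Unitary.coe_star_mul_self, Matrix.one_mul, Matrix.trace_diagonal]
  simp

lemma mydiag_nonneg {A : Matrix n n ℝ} (hA : A.PosSemidef) (i : n) : 0 ≤ A i i := by
  exact hA.diag_nonneg

lemma mytrace_nonneg {A : Matrix n n ℝ} (hA : A.PosSemidef) : 0 ≤ A.trace :=
  Finset.sum_nonneg fun i _ => mydiag_nonneg hA i

open scoped MatrixOrder in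
lemma mytrace_mul_nonneg {A B : Matrix n n ℝ} (hA : A.PosSemidef) (hB : B.PosSemidef) :
    0 ≤ (A * B).trace := by
  have hS : (CFC.sqrt B).PosSemidef := (CFC.sqrt_nonneg B).posSemidef
  have h1 : A * B = A * CFC.sqrt B * CFC.sqrt B := by
    rw [Matrix.mul_assoc, CFC.sqrt_mul_sqrt_self B hB.nonneg]
  rw [h1, Matrix.trace_mul_cycle]
  have : CFC.sqrt B * A * CFC.sqrt B = (CFC.sqrt B)ᴴ * A * CFC.sqrt B := by rw [hS.isHermitian]
  exact mytrace_nonneg (this ▸ hA.conjTranspose_mul_mul_same (CFC.sqrt B))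

lemma mydet_one_add {M : Matrix n n ℝ} (hM : M.PosSemidef) :
    1 + M.trace ≤ (1 + M).det := by
  have hH := hM.isHermitian
  have hU1 : (hH.eigenvectorUnitary : Matrix n n ℝ) * star (hH.eigenvectorUnitary : Matrix n n ℝ) = 1 :=
    (Matrix.mem_unitaryGroup_iff).mp hH.eigenvectorUnitary.2
  have h1 : (1 : Matrix n n ℝ) + M =
      (hH.eigenvectorUnitary : Matrix n n ℝ) *
        (1 + diagonal (RCLike.ofReal ∘ hH.eigenvalues)) *
        (star hH.eigenvectorUnitary : Matrix n n ℝ) := by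
    rw [Matrix.mul_add, Matrix.add_mul, Matrix.mul_one, hU1]
    rw [← Unitary.conjStarAlgAut_apply (S := ℝ), ← hH.spectral_theorem]
  rw [h1, Matrix.det_mul_right_comm, hU1, Matrix.one_mul]
  have h2 : (1 : Matrix n n ℝ) + diagonal (RCLike.ofReal ∘ hH.eigenvalues) =
      diagonal (fun i => 1 + hH.eigenvalues i) := by
    rw [← Matrix.diagonal_one, Matrix.diagonal_add]
    rfl
  rw [h2, Matrix.det_diagonal, mytrace_eq_sum_eigenvalues hH]
  exact myprod_one_add Finset.univ _ hM.eigenvalues_nonneg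

open scoped MatrixOrder in
lemma mydet_add {A B : Matrix n n ℝ} (hA : A.PosDef) (hB : B.PosSemidef) :
    A.det * (1 + (A⁻¹ * B).trace) ≤ (A + B).det := by
  set S := CFC.sqrt A with hSdef
  have hS : S.PosSemidef := (CFC.sqrt_nonneg A).posSemidef
  have hSS : S * S = A := CFC.sqrt_mul_sqrt_self A hA.posSemidef.nonneg
  have hdet : S.det * S.det = A.det := by rw [← Matrix.det_mul, hSS]
  have hSd : S.det ≠ 0 := by
    intro h; rw [h, mul_zero] at hdet; exact hA.det_pos.ne (hdet)
  set M := S⁻¹ * B * S⁻¹ with hMdef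
  have hM : M.PosSemidef := by
    have := hB.conjTranspose_mul_mul_same (B := S⁻¹)
    rwa [hS.isHermitian.inv.eq] at this
  have hinv : S * S⁻¹ = 1 := Matrix.mul_nonsing_inv S (isUnit_iff_ne_zero.mpr hSd)
  have hinv' : S⁻¹ * S = 1 := Matrix.nonsing_inv_mul S (isUnit_iff_ne_zero.mpr hSd)
  have hkey : A + B = S * (1 + M) * S := by
    rw [Matrix.mul_add, Matrix.mul_one, Matrix.add_mul, hSS, hMdef]
    congr 1
    symm
    calc S * (S⁻¹ * B * S⁻¹) * S = (S * S⁻¹) * B * (S⁻¹ * S) := by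
          simp only [Matrix.mul_assoc]
      _ = B := by rw [hinv, hinv', Matrix.one_mul, Matrix.mul_one]
  have htr : M.trace = (A⁻¹ * B).trace := by
    rw [hMdef, Matrix.trace_mul_cycle, ← Matrix.mul_inv_rev, hSS]
  rw [hkey, Matrix.det_mul, Matrix.det_mul]
  calc A.det * (1 + (A⁻¹ * B).trace) = (S.det * S.det) * (1 + M.trace) := by
        rw [hdet, htr]
    _ ≤ (S.det * S.det) * (1 + M).det := by
        apply mul_le_mul_of_nonneg_left (mydet_one_add hM)
        nlinarith [hA.det_pos, hdet]
    _ = S.det * (1 + M).det * S.det := by ring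

lemma mydet_le_pow [Nonempty n] {A : Matrix n n ℝ} (hA : A.PosSemidef) :
    A.det ≤ (A.trace / Fintype.card n) ^ Fintype.card n := by
  have hH := hA.isHermitian
  have hc : (0:ℝ) < Fintype.card n := by
    exact_mod_cast Fintype.card_pos
  have hgm := Real.geom_mean_le_arith_mean_weighted Finset.univ
      (fun _ => (Fintype.card n : ℝ)⁻¹) hH.eigenvalues
      (fun i _ => by positivity)
      (by simp [Finset.sum_const, Finset.card_univ])
      (fun i _ => hA.eigenvalues_nonneg i)
  rw [Real.finset_prod_rpow _ _ (fun i _ => hA.eigenvalues_nonneg i)] at hgm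
  have hdet : A.det = ∏ i, hH.eigenvalues i := by
    rw [hH.det_eq_prod_eigenvalues]; norm_num
  have hprod_nonneg : 0 ≤ ∏ i, hH.eigenvalues i :=
    Finset.prod_nonneg fun i _ => hA.eigenvalues_nonneg i
  have h2 : ((∏ i, hH.eigenvalues i) ^ ((Fintype.card n : ℝ)⁻¹)) ^ (Fintype.card n)
      ≤ (∑ i, (Fintype.card n : ℝ)⁻¹ * hH.eigenvalues i) ^ (Fintype.card n) := by
    apply pow_le_pow_left₀ (Real.rpow_nonneg hprod_nonneg _) hgm
  rw [Real.rpow_inv_natCast_pow hprod_nonneg Fintype.card_ne_zero] at h2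
  rw [hdet, mytrace_eq_sum_eigenvalues hH]
  calc ∏ i, hH.eigenvalues i ≤ _ := h2
    _ = ((∑ i, hH.eigenvalues i) / Fintype.card n) ^ Fintype.card n := by
        rw [← Finset.mul_sum]
        congr 1
        rw [inv_mul_eq_div]


lemma mypsd_outer (v : n → ℝ) : (vecMulVec v v).PosSemidef := by
  refine PosSemidef.of_dotProduct_mulVec_nonneg ?_ ?_
  · ext i j
    simp [vecMulVec_apply, conjTranspose_apply, mul_comm]
  · intro x
    have h : (star x) ⬝ᵥ (vecMulVec v v *ᵥ x) = (∑ i, v i * x i) ^ 2 := by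
      simp only [vecMulVec_apply, Matrix.mulVec, dotProduct, Pi.star_apply, star_trivial,
        sq, Finset.sum_mul_sum]
      rw [Finset.sum_comm]
      refine Finset.sum_congr rfl fun i _ => ?_
      rw [Finset.mul_sum]
      refine Finset.sum_congr rfl fun j _ => by ring
    rw [h]
    positivity

lemma mytrace_outer (v : EuclideanSpace ℝ (Fin d)) :
    (vecMulVec (v : Fin d → ℝ) v).trace = ‖v‖ ^ 2 := by
  rw [← real_inner_self_eq_norm_sq]
  simp [Matrix.trace, Matrix.diag, vecMulVec_apply, PiLp.inner_apply, RCLike.inner_apply]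
  rw [EuclideanSpace.norm_sq_eq]
  simp [sq, Real.norm_eq_abs]

lemma mypsd_sum {ι : Type*} (s : Finset ι) (f : ι → Matrix n n ℝ)
    (h : ∀ i ∈ s, (f i).PosSemidef) : (∑ i ∈ s, f i).PosSemidef := by
  classical
  induction s using Finset.induction with
  | empty => simpa using Matrix.PosSemidef.zero
  | @insert a s ha ih =>
    rw [Finset.sum_insert ha]
    exact (h a (Finset.mem_insert_self a s)).add
      (ih fun i hi => h i (Finset.mem_insert_of_mem hi))

end aux



/-- Counting bound for the batched elliptical potential: with `A_0 = I`,
`A_{k+1} = A_k + Φ_k` where `Φ_k = Σ_{t=kN}^{(k+1)N-1} φ_t φ_tᵀ` and `‖φ_t‖ ≤ 1`,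
if `N ε ≥ d log(1 + KN/d)` then the set `K⁺` of batches `k < K` with
`Tr(A_k⁻¹ Φ_k) ≥ N ε` satisfies `|K⁺| · log(Nε / (d log(1 + KN/d))) ≤ d log(1 + KN/d)`. -/
theorem batched_elliptical_potential_count
    (d K N : ℕ) (hd : 0 < d) (hK : 0 < K) (hN : 0 < N)
    (ε : ℝ) (hε : 0 < ε)
    (φ : ℕ → EuclideanSpace ℝ (Fin d))
    (hφ : ∀ t < K * N, ‖φ t‖ ≤ 1)
    (A : ℕ → Matrix (Fin d) (Fin d) ℝ)
    (hA0 : A 0 = 1)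
    (hA : ∀ k, A (k + 1) = A k + ∑ t ∈ Finset.Ico (k * N) ((k + 1) * N),
        vecMulVec (φ t) (φ t))
    (hNε : (N : ℝ) * ε ≥ (d : ℝ) * Real.log (1 + (K : ℝ) * N / d)) :
    ({k : ℕ | k < K ∧ (N : ℝ) * ε ≤
        Matrix.trace ((A k)⁻¹ * ∑ t ∈ Finset.Ico (k * N) ((k + 1) * N),
          vecMulVec (φ t) (φ t))}.ncard : ℝ) *
        Real.log ((N : ℝ) * ε / ((d : ℝ) * Real.log (1 + (K : ℝ) * N / d))) ≤
      (d : ℝ) * Real.log (1 + (K : ℝ) * N / d) := by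
  classical
  have hd' : (0:ℝ) < d := by exact_mod_cast hd
  have hKN : (0:ℝ) < (K:ℝ) * N := by
    have : (0:ℝ) < (K:ℝ) := by exact_mod_cast hK
    have : (0:ℝ) < (N:ℝ) := by exact_mod_cast hN
    positivity
  have hlogpos : 0 < Real.log (1 + (K : ℝ) * N / d) := by
    apply Real.log_pos
    have : 0 < (K:ℝ) * N / d := by positivity
    linarith
  set L : ℝ := (d : ℝ) * Real.log (1 + (K : ℝ) * N / d) with hLdef
  have hL : 0 < L := by positivity
  have hNε' : 0 < (N:ℝ) * ε := by
    have : (0:ℝ) < (N:ℝ) := by exact_mod_cast hN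
    positivity
  set Φ : ℕ → Matrix (Fin d) (Fin d) ℝ :=
    fun k => ∑ t ∈ Finset.Ico (k * N) ((k + 1) * N), vecMulVec (φ t) (φ t) with hΦdef
  have hΦpsd : ∀ k, (Φ k).PosSemidef := fun k =>
    mypsd_sum _ _ fun t _ => mypsd_outer (φ t)
  have hAposdef : ∀ k, (A k).PosDef := by
    intro k; induction k with
    | zero => rw [hA0]; exact Matrix.PosDef.one
    | succ k ih =>
      rw [hA k]; exact ih.add_posSemidef (hΦpsd k)
  have hstep : ∀ k, (A k).det * (1 + ((A k)⁻¹ * Φ k).trace) ≤ (A (k+1)).det := by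
    intro k; rw [hA k]; exact mydet_add (hAposdef k) (hΦpsd k)
  have htrnn : ∀ k, 0 ≤ ((A k)⁻¹ * Φ k).trace := fun k =>
    mytrace_mul_nonneg (hAposdef k).inv.posSemidef (hΦpsd k)
  have hdetpos : ∀ k, 0 < (A k).det := fun k => (hAposdef k).det_pos
  have hdetmono : ∀ k, (A k).det ≤ (A (k+1)).det := by
    intro k
    calc (A k).det = (A k).det * 1 := (mul_one _).symm
      _ ≤ (A k).det * (1 + ((A k)⁻¹ * Φ k).trace) := by
          apply mul_le_mul_of_nonneg_left _ (hdetpos k).le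
          linarith [htrnn k]
      _ ≤ _ := hstep k
  have hdetmono' : Monotone fun k => (A k).det := monotone_nat_of_le_succ hdetmono
  have hdet1 : ∀ k, 1 ≤ (A k).det := by
    intro k
    have := hdetmono' (Nat.zero_le k)
    simpa [hA0] using this
  -- trace bound
  have htrA : ∀ k, k ≤ K → (A k).trace ≤ (d:ℝ) + k * N := by
    intro k
    induction k with
    | zero => intro _; rw [hA0]; simp [Matrix.trace_one]
    | succ k ih =>
      intro hk
      have hk' : k ≤ K := Nat.le_of_succ_le hk
      have hΦtr : (Φ k).trace ≤ (N:ℝ) := by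
        rw [hΦdef, Matrix.trace_sum]
        have hb : ∀ t ∈ Finset.Ico (k*N) ((k+1)*N), (vecMulVec (φ t) (φ t)).trace ≤ 1 := by
          intro t ht
          rw [mytrace_outer (φ t)]
          have htK : t < K * N :=
            lt_of_lt_of_le (Finset.mem_Ico.mp ht).2 (Nat.mul_le_mul_right _ hk)
          have h1 := hφ t htK
          nlinarith [norm_nonneg (φ t)]
        calc _ ≤ ∑ _t ∈ Finset.Ico (k*N) ((k+1)*N), (1:ℝ) := Finset.sum_le_sum hb
          _ = (N:ℝ) := by
              rw [Finset.sum_const, Nat.card_Ico]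
              simp [Nat.succ_mul, Nat.add_sub_cancel_left]
      rw [hA k, Matrix.trace_add]
      have := ih hk'
      push_cast
      push_cast at this
      have hΦtr' : (Φ k).trace ≤ (N:ℝ) := hΦtr
      rw [hΦdef] at hΦtr'
      linarith
  have hdetK : (A K).det ≤ (1 + (K:ℝ)*N/d) ^ d := by
    have : Nonempty (Fin d) := Fin.pos_iff_nonempty.mp hd
    have h1 := mydet_le_pow (hAposdef K).posSemidef
    have hcard : (Fintype.card (Fin d)) = d := by simp
    rw [hcard] at h1
    have h2 : (A K).trace / (d:ℝ) ≤ 1 + (K:ℝ)*N/d := by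
      rw [div_le_iff₀ hd']
      have := htrA K le_rfl
      have hKN' : ((K:ℝ)*N/d) * d = (K:ℝ)*N := by field_simp
      nlinarith
    calc (A K).det ≤ ((A K).trace / d) ^ d := h1
      _ ≤ (1 + (K:ℝ)*N/d) ^ d := by
          apply pow_le_pow_left₀ _ h2
          have := mytrace_nonneg (hAposdef K).posSemidef
          positivity
  have hlogdetK : Real.log (A K).det ≤ L := by
    calc Real.log (A K).det ≤ Real.log ((1 + (K:ℝ)*N/d) ^ d) :=
          Real.log_le_log (hdetpos K) hdetK
      _ = L := by rw [Real.log_pow, hLdef]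
  -- the finset
  set s : Finset ℕ := (Finset.range K).filter
      (fun k => (N:ℝ)*ε ≤ ((A k)⁻¹ * Φ k).trace) with hsdef
  have hset : {k : ℕ | k < K ∧ (N : ℝ) * ε ≤
        Matrix.trace ((A k)⁻¹ * ∑ t ∈ Finset.Ico (k * N) ((k + 1) * N),
          vecMulVec (φ t) (φ t))} = ↑s := by
    ext k
    simp only [hsdef, Set.mem_setOf_eq, Finset.coe_filter, Finset.mem_range, Set.mem_setOf_eq]
    exact Iff.rfl
  rw [hset, Set.ncard_coe_finset]
  -- telescoping sum
  have htel : ∑ k ∈ Finset.range K,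
      (Real.log (A (k+1)).det - Real.log (A k).det) = Real.log (A K).det := by
    rw [Finset.sum_range_sub (fun k => Real.log (A k).det), hA0, Matrix.det_one,
      Real.log_one, sub_zero]
  have hterm_nonneg : ∀ k ∈ Finset.range K,
      0 ≤ Real.log (A (k+1)).det - Real.log (A k).det := by
    intro k _
    have := Real.log_le_log (hdetpos k) (hdetmono k)
    linarith
  have hterm_big : ∀ k ∈ s, Real.log (1 + (N:ℝ)*ε) ≤
      Real.log (A (k+1)).det - Real.log (A k).det := by
    intro k hk
    obtain ⟨hkK, hP⟩ := Finset.mem_filter.mp hk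
    have htrpos : 0 < 1 + ((A k)⁻¹ * Φ k).trace := by linarith [htrnn k]
    have h1 : Real.log ((A k).det * (1 + ((A k)⁻¹ * Φ k).trace)) ≤ Real.log (A (k+1)).det :=
      Real.log_le_log (mul_pos (hdetpos k) htrpos) (hstep k)
    rw [Real.log_mul (hdetpos k).ne' htrpos.ne'] at h1
    have h2 : Real.log (1 + (N:ℝ)*ε) ≤ Real.log (1 + ((A k)⁻¹ * Φ k).trace) :=
      Real.log_le_log (by linarith) (by linarith)
    linarith
  have hsum : (s.card : ℝ) * Real.log (1 + (N:ℝ)*ε) ≤ Real.log (A K).det := by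
    calc (s.card : ℝ) * Real.log (1 + (N:ℝ)*ε)
        = ∑ _k ∈ s, Real.log (1 + (N:ℝ)*ε) := by
          rw [Finset.sum_const, nsmul_eq_mul]
      _ ≤ ∑ k ∈ s, (Real.log (A (k+1)).det - Real.log (A k).det) :=
          Finset.sum_le_sum hterm_big
      _ ≤ ∑ k ∈ Finset.range K, (Real.log (A (k+1)).det - Real.log (A k).det) := by
          apply Finset.sum_le_sum_of_subset_of_nonneg (Finset.filter_subset _ _)
          intro k hk _
          exact hterm_nonneg k hk
      _ = Real.log (A K).det := htel
  rcases Finset.eq_empty_or_nonempty s with hse | hsne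
  · rw [hse]
    simp only [Finset.card_empty, Nat.cast_zero, zero_mul]
    exact hL.le
  · obtain ⟨k, hk⟩ := hsne
    obtain ⟨hkK, hP⟩ := Finset.mem_filter.mp hk
    have hNεexp : 1 + (N:ℝ)*ε ≤ Real.exp L := by
      have h1 : 1 + (N:ℝ)*ε ≤ 1 + ((A k)⁻¹ * Φ k).trace := by linarith
      have h2 : 1 + ((A k)⁻¹ * Φ k).trace ≤ (A k).det * (1 + ((A k)⁻¹ * Φ k).trace) := by
        have := hdet1 k
        nlinarith [htrnn k]
      have h3 : (A (k+1)).det ≤ (A K).det := hdetmono' (Finset.mem_range.mp hkK)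
      have h4 : (A K).det ≤ Real.exp L := by
        have := Real.exp_log (hdetpos K)
        calc (A K).det = Real.exp (Real.log (A K).det) := (Real.exp_log (hdetpos K)).symm
          _ ≤ Real.exp L := Real.exp_le_exp.mpr hlogdetK
      linarith [hstep k]
    have hdivle : (N:ℝ)*ε / L ≤ 1 + (N:ℝ)*ε := by
      rw [div_le_iff₀ hL]
      rcases le_or_gt L 1 with h | h
      · have he1 : 1 - L ≤ Real.exp (-L) := by linarith [Real.add_one_le_exp (-L)]
        have he2 : Real.exp L * (1 - L) ≤ 1 := by
          calc Real.exp L * (1 - L) ≤ Real.exp L * Real.exp (-L) :=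
                mul_le_mul_of_nonneg_left he1 (Real.exp_pos L).le
            _ = 1 := by rw [← Real.exp_add]; simp
        nlinarith
      · nlinarith
    have hlogle : Real.log ((N:ℝ)*ε / L) ≤ Real.log (1 + (N:ℝ)*ε) :=
      Real.log_le_log (by positivity) hdivle
    calc (s.card : ℝ) * Real.log ((N:ℝ)*ε / L)
        ≤ (s.card : ℝ) * Real.log (1 + (N:ℝ)*ε) := by
          apply mul_le_mul_of_nonneg_left hlogle (Nat.cast_nonneg _)
      _ ≤ Real.log (A K).det := hsum
      _ ≤ L := hlogdetK
end

section
/- Let A be a real symmetric d×d matrix such that A − I is positive semidefinite, and let Φ = Σ_{t=1}^n φ_t φ_tᵀ for vectors φ_1, …, φ_n ∈ ℝ^d. Then Tr(A^{-1} Φ) ≤ (det(A+Φ)/det(A)) · log( det(A+Φ)/det(A) ). -/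
open Matrix
open scoped MatrixOrder

lemma aux_vecMulVec_posSemidef {d : ℕ} (x : Fin d → ℝ) :
    (vecMulVec x x).PosSemidef := by
  refine PosSemidef.of_dotProduct_mulVec_nonneg ?_ ?_
  · ext i j
    simp [conjTranspose_apply, vecMulVec_apply, mul_comm]
  · intro v
    have h : (vecMulVec x x) *ᵥ v = (x ⬝ᵥ v) • x := by
      ext i
      simp [mulVec, vecMulVec_apply, dotProduct, Finset.mul_sum, mul_assoc, Finset.sum_mul,
        mul_comm, mul_left_comm]
    rw [h]
    have h2 : star v ⬝ᵥ ((x ⬝ᵥ v) • x) = (x ⬝ᵥ v) * (x ⬝ᵥ v) := by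
      simp [dotProduct_smul, dotProduct_comm, smul_eq_mul]
    rw [h2]
    exact mul_self_nonneg _

lemma aux_scalar {d : ℕ} (μ : Fin d → ℝ) (hμ : ∀ i, 0 ≤ μ i) :
    ∑ i, μ i ≤ (∏ i, (1 + μ i)) * Real.log (∏ i, (1 + μ i)) := by
  set P := ∏ i, (1 + μ i) with hP
  have hpos : ∀ i : Fin d, (0:ℝ) < 1 + μ i := fun i => by nlinarith [hμ i]
  have hfac : ∀ a : Fin d, 1 + μ a ≤ P := by
    intro a
    have h := Finset.prod_le_prod (s := Finset.univ)
      (f := fun i => if i = a then 1 + μ i else 1) (g := fun i => 1 + μ i)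
      (fun i _ => by by_cases hia : i = a <;> simp [hia] <;> linarith [hμ a])
      (fun i _ => by by_cases hia : i = a <;> simp [hia] <;> linarith [hμ i])
    simpa [Finset.prod_ite_eq, Finset.prod_ite_eq', hP] using h
  have hlogP : Real.log P = ∑ i, Real.log (1 + μ i) :=
    Real.log_prod (fun i _ => (hpos i).ne')
  have key : ∀ i : Fin d, μ i ≤ P * Real.log (1 + μ i) := by
    intro i
    have hlognn : 0 ≤ Real.log (1 + μ i) := Real.log_nonneg (by linarith [hμ i])
    have h1 : μ i ≤ (1 + μ i) * Real.log (1 + μ i) := by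
      have he := Real.add_one_le_exp (-(Real.log (1 + μ i)))
      rw [Real.exp_neg, Real.exp_log (hpos i)] at he
      have hi := hpos i
      have : (1 + μ i) * (-(Real.log (1 + μ i)) + 1) ≤ 1 := by
        calc (1 + μ i) * (-(Real.log (1 + μ i)) + 1) ≤ (1 + μ i) * (1 + μ i)⁻¹ :=
              mul_le_mul_of_nonneg_left he hi.le
          _ = 1 := mul_inv_cancel₀ hi.ne'
      nlinarith
    calc μ i ≤ (1 + μ i) * Real.log (1 + μ i) := h1
      _ ≤ P * Real.log (1 + μ i) := mul_le_mul_of_nonneg_right (hfac i) hlognn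
  calc ∑ i, μ i ≤ ∑ i, P * Real.log (1 + μ i) := Finset.sum_le_sum (fun i _ => key i)
    _ = P * ∑ i, Real.log (1 + μ i) := by rw [Finset.mul_sum]
    _ = P * Real.log P := by rw [hlogP]

/-- Bridge between trace and determinant: if `A` is real symmetric with `A - I`
positive semidefinite and `Φ = Σ_t φ_t φ_tᵀ`, then
`Tr(A⁻¹ Φ) ≤ (det(A+Φ)/det A) · log(det(A+Φ)/det A)`. -/
theorem trace_inv_mul_le_det_ratio_mul_log_det_ratio
    (d n : ℕ) (A : Matrix (Fin d) (Fin d) ℝ)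
    (hAsymm : A.IsSymm) (hA : (A - 1).PosSemidef)
    (φ : Fin n → EuclideanSpace ℝ (Fin d)) :
    Matrix.trace (A⁻¹ * ∑ t, vecMulVec (φ t) (φ t)) ≤
      ((A + ∑ t, vecMulVec (φ t) (φ t)).det / A.det) *
        Real.log ((A + ∑ t, vecMulVec (φ t) (φ t)).det / A.det) := by
  classical
  set Φ : Matrix (Fin d) (Fin d) ℝ := ∑ t, vecMulVec (φ t) (φ t) with hΦdef
  have hΦ : Φ.PosSemidef := by
    rw [hΦdef]
    exact Finset.sum_induction _ _ (fun a b ha hb => ha.add hb) Matrix.PosSemidef.zero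
      (fun t _ => aux_vecMulVec_posSemidef (φ t))
  have hApd : A.PosDef := by
    have h := Matrix.PosDef.posSemidef_add hA (Matrix.PosDef.one (n := Fin d) (R := ℝ))
    rwa [sub_add_cancel] at h
  have hdetA : 0 < A.det := hApd.det_pos
  set S := CFC.sqrt A with hSdef
  have hSps : S.PosSemidef := Matrix.nonneg_iff_posSemidef.mp (CFC.sqrt_nonneg A)
  have hSS : S * S = A := CFC.sqrt_mul_sqrt_self A hApd.posSemidef.nonneg
  have hdetS : S.det * S.det = A.det := by rw [← det_mul, hSS]
  have hdetSne : S.det ≠ 0 := by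
    intro h
    rw [h, mul_zero] at hdetS
    exact hdetA.ne hdetS
  have hSunit : IsUnit S.det := hdetSne.isUnit
  have hSinvh : (S⁻¹)ᴴ = S⁻¹ := by
    rw [conjTranspose_nonsing_inv, hSps.isHermitian]
  set M := S⁻¹ * Φ * S⁻¹ with hMdef
  have hM : M.PosSemidef := by
    have h := hΦ.mul_mul_conjTranspose_same S⁻¹
    rwa [hSinvh] at h
  -- trace identity
  have hAinv : A⁻¹ = S⁻¹ * S⁻¹ := by rw [← hSS, Matrix.mul_inv_rev]
  have htr : Matrix.trace (A⁻¹ * Φ) = Matrix.trace M := by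
    rw [hAinv, mul_assoc, trace_mul_comm, hMdef, mul_assoc]
  -- determinant identity
  have hSMS : S * M * S = Φ := by
    rw [hMdef]
    calc S * (S⁻¹ * Φ * S⁻¹) * S = (S * S⁻¹) * Φ * (S⁻¹ * S) := by
          simp only [mul_assoc]
      _ = Φ := by rw [mul_nonsing_inv _ hSunit, nonsing_inv_mul _ hSunit, one_mul, mul_one]
  have hconj : A + Φ = S * (1 + M) * S := by
    rw [mul_add, mul_one, add_mul, hSS, hSMS]
  have hdet : (A + Φ).det = A.det * (1 + M).det := by
    rw [hconj, det_mul, det_mul, ← hdetS]; ring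
  have hratio : (A + Φ).det / A.det = (1 + M).det := by
    rw [hdet, mul_comm, mul_div_assoc, div_self hdetA.ne', mul_one]
  -- spectral decomposition of M
  have hMh : M.IsHermitian := hM.isHermitian
  set μ := hMh.eigenvalues with hμdef
  have hμnn : ∀ i, 0 ≤ μ i := hM.eigenvalues_nonneg
  set U : Matrix (Fin d) (Fin d) ℝ := (hMh.eigenvectorUnitary : Matrix (Fin d) (Fin d) ℝ)
    with hUdef
  have hspec : M = U * diagonal (RCLike.ofReal ∘ μ) * star U := hMh.spectral_theorem
  have hU1 : U * star U = 1 := Matrix.mem_unitaryGroup_iff.mp hMh.eigenvectorUnitary.2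
  have hU1' : star U * U = 1 := Matrix.mem_unitaryGroup_iff'.mp hMh.eigenvectorUnitary.2
  have htrM : Matrix.trace M = ∑ i, μ i := by
    conv_lhs => rw [hspec]
    rw [trace_mul_cycle, hU1', one_mul, trace_diagonal]
    simp
  have hdet1M : (1 + M).det = ∏ i, (1 + μ i) := by
    have h1M : 1 + M = U * (1 + diagonal (RCLike.ofReal ∘ μ)) * star U := by
      rw [mul_add, mul_one, add_mul, hU1, hspec]
    rw [h1M, det_mul_right_comm, hU1, one_mul, ← diagonal_one, diagonal_add, det_diagonal]
    simp
  rw [hratio, htr, htrM, hdet1M]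
  exact aux_scalar μ hμnn
end

section
/- Let A be a real symmetric positive definite d×d matrix and X a real symmetric positive semidefinite d×d matrix. Then Tr((A + X)^{-1} X) ≤ log det(A + X) − log det(A). -/
open Matrix
open scoped MatrixOrder

private lemma trace_eq_sum_eigs {d : ℕ} {B : Matrix (Fin d) (Fin d) ℝ} (hB : B.IsHermitian) :
    B.trace = ∑ i, hB.eigenvalues i := by
  simpa using hB.trace_eq_sum_eigenvalues

private lemma log_det_le_trace_sub {d : ℕ} {B : Matrix (Fin d) (Fin d) ℝ} (hB : B.PosDef) :
    Real.log B.det ≤ B.trace - d := by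
  have hH := hB.isHermitian
  have hev : ∀ i, 0 < hH.eigenvalues i := hB.eigenvalues_pos
  rw [hH.det_eq_prod_eigenvalues, trace_eq_sum_eigs hH]
  simp only [RCLike.ofReal_real_eq_id, id_eq]
  rw [Real.log_prod (fun i _ => (hev i).ne')]
  calc ∑ i, Real.log (hH.eigenvalues i) ≤ ∑ i : Fin d, (hH.eigenvalues i - 1) :=
        Finset.sum_le_sum fun i _ => Real.log_le_sub_one_of_pos (hev i)
    _ = (∑ i, hH.eigenvalues i) - d := by rw [Finset.sum_sub_distrib]; simp

private lemma posDef_conj {d : ℕ} {A R : Matrix (Fin d) (Fin d) ℝ} (hA : A.PosDef)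
    (hR : R.IsHermitian) (hdet : IsUnit R.det) : (R * A * R).PosDef := by
  have hRu : IsUnit R := (Matrix.isUnit_iff_isUnit_det R).mpr hdet
  have h1 : (Rᴴ * A * R).PosDef := by
    exact hA.conjTranspose_mul_mul_same (Matrix.mulVec_injective_of_isUnit hRu)
  rwa [hR.eq] at h1

/-- If `A` is real symmetric positive definite and `X` is real symmetric positive
semidefinite, then `Tr((A + X)⁻¹ X) ≤ log det (A + X) - log det A`. -/
theorem trace_inv_add_mul_le_log_det_sub
    (d : ℕ) (A X : Matrix (Fin d) (Fin d) ℝ)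
    (hAsymm : A.IsSymm) (hA : A.PosDef)
    (hXsymm : X.IsSymm) (hX : X.PosSemidef) :
    Matrix.trace ((A + X)⁻¹ * X) ≤ Real.log (A + X).det - Real.log A.det := by
  set M := A + X with hMdef
  have hM : M.PosDef := hA.add_posSemidef hX
  have hMinv : M⁻¹.PosDef := hM.inv
  set R := CFC.sqrt M⁻¹ with hRdef
  have hRherm : R.IsHermitian := (CFC.sqrt_nonneg M⁻¹).posSemidef.isHermitian
  have hRR : R * R = M⁻¹ := CFC.sqrt_mul_sqrt_self M⁻¹ hMinv.posSemidef.nonneg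
  have hdetR : IsUnit R.det := by
    have : R.det * R.det = M⁻¹.det := by rw [← Matrix.det_mul, hRR]
    have h0 : R.det ≠ 0 := by
      intro h
      rw [h, mul_zero] at this
      exact hMinv.det_pos.ne' this.symm
    exact h0.isUnit
  set B := R * A * R with hBdef
  have hB : B.PosDef := posDef_conj hA hRherm hdetR
  -- determinant of B
  have hdetB : B.det = A.det / M.det := by
    have : B.det = R.det * A.det * R.det := by rw [hBdef, Matrix.det_mul, Matrix.det_mul]
    rw [this]
    have : R.det * A.det * R.det = (R.det * R.det) * A.det := by ring
    rw [this, ← Matrix.det_mul, hRR, Matrix.det_nonsing_inv]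
    rw [Ring.inverse_eq_inv]
    field_simp
  -- trace of B
  have htrB : B.trace = Matrix.trace (M⁻¹ * A) := by
    rw [hBdef, Matrix.trace_mul_cycle, hRR]
  -- trace identity
  have hMX : M⁻¹ * X = 1 - M⁻¹ * A := by
    have h1 : M⁻¹ * M = 1 := Matrix.nonsing_inv_mul M hM.det_pos.ne'.isUnit
    calc M⁻¹ * X = M⁻¹ * (M - A) := by rw [hMdef]; congr 1; abel
      _ = M⁻¹ * M - M⁻¹ * A := Matrix.mul_sub _ _ _
      _ = 1 - M⁻¹ * A := by rw [h1]
  have htr : Matrix.trace (M⁻¹ * X) = d - Matrix.trace (M⁻¹ * A) := by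
    rw [hMX, Matrix.trace_sub, Matrix.trace_one]
    simp
  rw [htr]
  have key := log_det_le_trace_sub hB
  rw [hdetB, htrB, Real.log_div hA.det_pos.ne' hM.det_pos.ne'] at key
  linarith
end

section
/- Let A and B be real symmetric positive definite d×d matrices such that A − B is positive semidefinite. Then for every x ∈ ℝ^d, xᵀ A x ≤ (det(A)/det(B)) · xᵀ B x. -/
open Matrix Finset
open scoped MatrixOrder

lemma quad_le_det_of_one_le (n : ℕ) (M : Matrix (Fin n) (Fin n) ℝ) (hM : M.IsHermitian)
    (h1 : (M - 1).PosSemidef) (y : Fin n → ℝ) :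
    y ⬝ᵥ M *ᵥ y ≤ M.det * (y ⬝ᵥ y) := by
  set U : Matrix (Fin n) (Fin n) ℝ := (hM.eigenvectorUnitary : Matrix (Fin n) (Fin n) ℝ) with hU
  set μ := hM.eigenvalues with hμ
  have hdiag : star U * M * U = diagonal μ := by simpa using hM.conjStarAlgAut_star_eigenvectorUnitary
  have hUU : star U * U = 1 := mem_unitaryGroup_iff'.mp hM.eigenvectorUnitary.2
  have hUU' : U * star U = 1 := mem_unitaryGroup_iff.mp hM.eigenvectorUnitary.2
  have hge : ∀ i, 1 ≤ μ i := by
    have hpsd : PosSemidef (star U * (M - 1) * U) := h1.conjTranspose_mul_mul_same U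
    have heq : star U * (M - 1) * U = diagonal (fun i => μ i - 1) := by
      rw [Matrix.mul_sub, Matrix.sub_mul, hdiag, Matrix.mul_one, hUU]
      ext i j
      by_cases h : i = j <;> simp [diagonal, h, Matrix.one_apply]
    rw [heq] at hpsd
    intro i
    have := (posSemidef_diagonal_iff.mp hpsd) i
    linarith
  set c : Fin n → ℝ := star U *ᵥ y with hc
  have hUt : Uᵀ *ᵥ y = c := by
    rw [hc, Matrix.star_eq_conjTranspose, conjTranspose_eq_transpose_of_trivial]
  have hyMy : y ⬝ᵥ M *ᵥ y = ∑ i, μ i * (c i * c i) := by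
    conv_lhs => rw [hM.spectral_theorem, Unitary.conjStarAlgAut_apply, Matrix.mul_assoc, ← Matrix.mulVec_mulVec,
      ← Matrix.mulVec_mulVec]
    rw [dotProduct_mulVec, ← mulVec_transpose, hUt]
    simp only [dotProduct, mulVec_diagonal]
    refine Finset.sum_congr rfl (fun i _ => ?_)
    rw [← hc]
    simp only [Function.comp_apply, RCLike.ofReal_real_eq_id, id_eq]
    ring
  have hUUt : U * Uᵀ = 1 := by
    rw [← conjTranspose_eq_transpose_of_trivial, ← Matrix.star_eq_conjTranspose]; exact hUU'
  have hyy : y ⬝ᵥ y = ∑ i, c i * c i := by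
    have h2 : c ⬝ᵥ c = y ⬝ᵥ y := by
      rw [hc, dotProduct_mulVec, ← mulVec_transpose, Matrix.star_eq_conjTranspose,
        conjTranspose_eq_transpose_of_trivial, transpose_transpose, Matrix.mulVec_mulVec,
        hUUt, one_mulVec]
    rw [← h2]; rfl
  have hdet : M.det = ∏ i, μ i := by simpa using hM.det_eq_prod_eigenvalues
  rw [hyMy, hyy, hdet, Finset.mul_sum]
  apply Finset.sum_le_sum
  intro i _
  have hone : (1:ℝ) ≤ ∏ j ∈ univ.erase i, μ j := by
    calc (1:ℝ) = ∏ _j ∈ univ.erase i, (1:ℝ) := by simp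
    _ ≤ ∏ j ∈ univ.erase i, μ j :=
        Finset.prod_le_prod (by simp) (fun j _ => hge j)
  have hle : μ i ≤ ∏ j, μ j := by
    rw [← Finset.mul_prod_erase univ μ (mem_univ i)]
    nlinarith [hge i]
  exact mul_le_mul_of_nonneg_right hle (mul_self_nonneg _)

/-- If `A ⪰ B ≻ 0` are real symmetric positive definite matrices, then for every
vector `x`, `xᵀ A x ≤ (det A / det B) · xᵀ B x`. -/
theorem quadForm_le_det_ratio_mul_quadForm
    (d : ℕ) (A B : Matrix (Fin d) (Fin d) ℝ)
    (hAsymm : A.IsSymm) (hA : A.PosDef)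
    (hBsymm : B.IsSymm) (hB : B.PosDef)
    (hAB : (A - B).PosSemidef) :
    ∀ x : Fin d → ℝ, x ⬝ᵥ A.mulVec x ≤ (A.det / B.det) * (x ⬝ᵥ B.mulVec x) := by
  intro x
  set S := CFC.sqrt B with hS
  have hSpsd : S.PosSemidef := Matrix.nonneg_iff_posSemidef.mp (CFC.sqrt_nonneg B)
  have hSS : S * S = B := CFC.sqrt_mul_sqrt_self B hB.posSemidef.nonneg
  have hdetB : 0 < B.det := hB.det_pos
  have hdetA : 0 < A.det := hA.det_pos
  have hdetS : S.det ≠ 0 := by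
    intro h
    rw [← hSS, det_mul, h, mul_zero] at hdetB
    exact lt_irrefl _ hdetB
  set T := S⁻¹ with hT
  have hST : S * T = 1 := mul_nonsing_inv S (isUnit_iff_ne_zero.mpr hdetS)
  have hTS : T * S = 1 := nonsing_inv_mul S (isUnit_iff_ne_zero.mpr hdetS)
  have hSh : Sᴴ = S := hSpsd.isHermitian
  have hTh : Tᴴ = T := by rw [hT, conjTranspose_nonsing_inv, hSh]
  have hSt : Sᵀ = S := by rw [← conjTranspose_eq_transpose_of_trivial, hSh]
  have hTt : Tᵀ = T := by rw [← conjTranspose_eq_transpose_of_trivial, hTh]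
  set M := T * A * T with hM
  have hMh : M.IsHermitian := by
    rw [Matrix.IsHermitian, hM, conjTranspose_mul, conjTranspose_mul, hTh, hA.isHermitian.eq]
    rw [Matrix.mul_assoc]
  have hTBT : T * B * T = 1 := by
    rw [← hSS, ← Matrix.mul_assoc, Matrix.mul_assoc (T * S), hST, Matrix.mul_one, hTS]
  have hM1 : (M - 1).PosSemidef := by
    have h := hAB.conjTranspose_mul_mul_same T
    rw [hTh] at h
    have heq : T * (A - B) * T = M - 1 := by
      rw [Matrix.mul_sub, Matrix.sub_mul, hTBT, hM]
    rwa [heq] at h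
  have hdetM : M.det = A.det / B.det := by
    have hdB : S.det * S.det = B.det := by rw [← det_mul, hSS]
    rw [hM, det_mul, det_mul, det_nonsing_inv, ← hdB]
    field_simp
    rw [Ring.inverse_eq_inv', ← mul_pow, inv_mul_cancel₀ hdetS, one_pow]
  set y := S *ᵥ x with hy
  have hTy : T *ᵥ y = x := by
    rw [hy, Matrix.mulVec_mulVec, hTS, one_mulVec]
  have hyMy : y ⬝ᵥ M *ᵥ y = x ⬝ᵥ A *ᵥ x := by
    rw [hM, ← Matrix.mulVec_mulVec, ← Matrix.mulVec_mulVec, hTy, dotProduct_mulVec,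
      ← mulVec_transpose, hTt, hTy]
  have hyy : y ⬝ᵥ y = x ⬝ᵥ B *ᵥ x := by
    rw [hy, dotProduct_mulVec, ← mulVec_transpose, hSt, Matrix.mulVec_mulVec, hSS,
      dotProduct_comm]
  have := quad_le_det_of_one_le d M hMh hM1 y
  rw [hyMy, hyy, hdetM] at this
  exact this
end

section
/- Let A be a real symmetric d×d matrix such that A − I is positive semidefinite, and let Δ be a real symmetric d×d matrix with |Δ_{ij}| ≤ ε for all entries, where ε > 0 and d·ε < 1. Then A + Δ is positive definite, and for every φ ∈ ℝ^d with ‖φ‖ ≤ 1 one has |φᵀ Δ φ| ≤ d·ε and |φᵀ( (A+Δ)^{-1} − A^{-1} )φ| ≤ d·ε/(1 − d·ε). -/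
open Matrix Finset
open scoped RealInnerProductSpace

section aux

variable {d : ℕ}

private lemma dot_eq_norm (x : EuclideanSpace ℝ (Fin d)) :
    (x : Fin d → ℝ) ⬝ᵥ (x : Fin d → ℝ) = ‖x‖ ^ 2 := by
  rw [← real_inner_self_eq_norm_sq]
  simp [PiLp.inner_apply, dotProduct, RCLike.inner_apply, mul_comm]
  rw [EuclideanSpace.norm_eq, Real.sq_sqrt (Finset.sum_nonneg fun i _ => sq_nonneg _)]
  simp [sq]

private lemma abs_dot_le (x y : EuclideanSpace ℝ (Fin d)) :
    |(x : Fin d → ℝ) ⬝ᵥ (y : Fin d → ℝ)| ≤ ‖x‖ * ‖y‖ := by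
  have h := abs_real_inner_le_norm x y
  have : (inner ℝ x y : ℝ) = (x : Fin d → ℝ) ⬝ᵥ (y : Fin d → ℝ) := by
    simp [PiLp.inner_apply, dotProduct, RCLike.inner_apply, mul_comm]
  rwa [this] at h

private lemma sum_abs_le (x : EuclideanSpace ℝ (Fin d)) :
    ∑ i, |x i| ≤ Real.sqrt d * ‖x‖ := by
  have h1 : (∑ i, |x i|) ^ 2 ≤ (d : ℝ) * ∑ i, |x i| ^ 2 := by
    simpa using sq_sum_le_card_mul_sum_sq (s := (univ : Finset (Fin d))) (f := fun i => |x i|)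
  have h2 : ∑ i, |x i| ^ 2 = ‖x‖ ^ 2 := by
    simp_rw [sq_abs]
    rw [← dot_eq_norm x]
    simp [dotProduct, sq]
  have h3 : (∑ i, |x i|) ^ 2 ≤ (Real.sqrt d * ‖x‖) ^ 2 := by
    rw [mul_pow, Real.sq_sqrt (by positivity)]
    rw [h2] at h1; exact h1
  have h4 : 0 ≤ ∑ i, |x i| := Finset.sum_nonneg fun i _ => abs_nonneg _
  have h5 : 0 ≤ Real.sqrt d * ‖x‖ := by positivity
  nlinarith [h3]

end aux

/-- Matrix perturbation: if `A ⪰ I` is real symmetric, `Δ` is real symmetric with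
entries bounded by `ε` where `d·ε < 1`, then `A + Δ` is positive definite, and for
every unit-norm vector `φ`, `|φᵀ Δ φ| ≤ d ε` and
`|φᵀ((A+Δ)⁻¹ - A⁻¹)φ| ≤ d ε / (1 - d ε)`. -/
theorem matrix_perturbation
    (d : ℕ) (A Δ : Matrix (Fin d) (Fin d) ℝ) (ε : ℝ)
    (hAsymm : A.IsSymm) (hA : (A - 1).PosSemidef)
    (hΔsymm : Δ.IsSymm) (hΔ : ∀ i j, |Δ i j| ≤ ε)
    (hε : 0 < ε) (hdε : (d : ℝ) * ε < 1) :
    (A + Δ).PosDef ∧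
      ∀ φ : EuclideanSpace ℝ (Fin d), ‖φ‖ ≤ 1 →
        |φ ⬝ᵥ Δ.mulVec φ| ≤ (d : ℝ) * ε ∧
        |φ ⬝ᵥ ((A + Δ)⁻¹ - A⁻¹).mulVec φ| ≤ (d : ℝ) * ε / (1 - (d : ℝ) * ε) := by
  -- key bilinear bound
  have key : ∀ u v : EuclideanSpace ℝ (Fin d),
      |(u : Fin d → ℝ) ⬝ᵥ Δ.mulVec v| ≤ (d : ℝ) * ε * (‖u‖ * ‖v‖) := by
    intro u v
    have h1 : |(u : Fin d → ℝ) ⬝ᵥ Δ.mulVec v| ≤ ε * ((∑ i, |u i|) * (∑ j, |v j|)) := by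
      calc |(u : Fin d → ℝ) ⬝ᵥ Δ.mulVec v|
          ≤ ∑ i, |u i * ∑ j, Δ i j * v j| := by
            exact Finset.abs_sum_le_sum_abs _ _
        _ ≤ ∑ i, |u i| * ∑ j, ε * |v j| := by
            apply Finset.sum_le_sum; intro i _
            rw [abs_mul]
            apply mul_le_mul_of_nonneg_left _ (abs_nonneg _)
            calc |∑ j, Δ i j * v j| ≤ ∑ j, |Δ i j * v j| := Finset.abs_sum_le_sum_abs _ _
              _ ≤ ∑ j, ε * |v j| := by
                  apply Finset.sum_le_sum; intro j _
                  rw [abs_mul]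
                  exact mul_le_mul_of_nonneg_right (hΔ i j) (abs_nonneg _)
        _ = ε * ((∑ i, |u i|) * (∑ j, |v j|)) := by
            rw [← Finset.mul_sum, ← Finset.sum_mul]; ring
    have h2 : (∑ i, |u i|) * (∑ j, |v j|) ≤ (Real.sqrt d * ‖u‖) * (Real.sqrt d * ‖v‖) := by
      apply mul_le_mul (sum_abs_le u) (sum_abs_le v)
        (Finset.sum_nonneg fun j _ => abs_nonneg _) (by positivity)
    have h3 : (Real.sqrt d * ‖u‖) * (Real.sqrt d * ‖v‖) = (d : ℝ) * (‖u‖ * ‖v‖) := by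
      have hs : Real.sqrt d * Real.sqrt d = (d : ℝ) := Real.mul_self_sqrt (by positivity)
      rw [show (Real.sqrt d * ‖u‖) * (Real.sqrt d * ‖v‖)
          = (Real.sqrt d * Real.sqrt d) * (‖u‖ * ‖v‖) by ring, hs]
    calc |(u : Fin d → ℝ) ⬝ᵥ Δ.mulVec v| ≤ ε * ((∑ i, |u i|) * (∑ j, |v j|)) := h1
      _ ≤ ε * ((d : ℝ) * (‖u‖ * ‖v‖)) := by
          apply mul_le_mul_of_nonneg_left _ hε.le
          rw [← h3]; exact h2
      _ = (d : ℝ) * ε * (‖u‖ * ‖v‖) := by ring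
  -- A quadratic lower bound
  have hAq : ∀ x : EuclideanSpace ℝ (Fin d),
      ‖x‖ ^ 2 ≤ (x : Fin d → ℝ) ⬝ᵥ A.mulVec x := by
    intro x
    have := hA.dotProduct_mulVec_nonneg (x : Fin d → ℝ)
    rw [star_trivial, sub_mulVec, one_mulVec, dotProduct_sub] at this
    rw [← dot_eq_norm x]; linarith
  -- B quadratic lower bound
  set B : Matrix (Fin d) (Fin d) ℝ := A + Δ with hB
  have hBq : ∀ x : EuclideanSpace ℝ (Fin d),
      (1 - (d : ℝ) * ε) * ‖x‖ ^ 2 ≤ (x : Fin d → ℝ) ⬝ᵥ B.mulVec x := by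
    intro x
    have h1 := hAq x
    have h2 := key x x
    have h3 : (x : Fin d → ℝ) ⬝ᵥ B.mulVec x
        = (x : Fin d → ℝ) ⬝ᵥ A.mulVec x + (x : Fin d → ℝ) ⬝ᵥ Δ.mulVec x := by
      rw [hB, add_mulVec, dotProduct_add]
    have h4 : -((d:ℝ) * ε * (‖x‖ * ‖x‖)) ≤ (x : Fin d → ℝ) ⬝ᵥ Δ.mulVec x :=
      neg_le_of_abs_le h2 |>.trans_eq' rfl
    nlinarith [abs_nonneg ((x : Fin d → ℝ) ⬝ᵥ Δ.mulVec x)]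
  have hpos : 0 < 1 - (d : ℝ) * ε := by linarith
  -- Positive definiteness
  have hBherm : B.IsHermitian := by
    rw [Matrix.IsHermitian, conjTranspose_eq_transpose_of_trivial]
    show Bᵀ = B
    rw [hB, transpose_add, hAsymm, hΔsymm]
  have hBpd : B.PosDef := by
    refine Matrix.PosDef.of_dotProduct_mulVec_pos hBherm fun x hx => ?_
    rw [star_trivial]
    have hxn : 0 < ‖(WithLp.toLp 2 x)‖ := by
      rw [norm_pos_iff]; intro h; exact hx (by simpa using congrArg WithLp.ofLp h)
    exact lt_of_lt_of_le (mul_pos hpos (pow_pos hxn 2)) (hBq (WithLp.toLp 2 x))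
  have hApd : A.PosDef := by
    refine Matrix.PosDef.of_dotProduct_mulVec_pos ?_ fun x hx => ?_
    · rw [Matrix.IsHermitian, conjTranspose_eq_transpose_of_trivial]; exact hAsymm
    · rw [star_trivial]
      have hxn : 0 < ‖(WithLp.toLp 2 x)‖ := by
        rw [norm_pos_iff]; intro h; exact hx (by simpa using congrArg WithLp.ofLp h)
      exact lt_of_lt_of_le (pow_pos hxn 2) (hAq (WithLp.toLp 2 x))
  refine ⟨hBpd, fun φ hφ => ?_⟩
  have hφn : ‖φ‖ ≤ 1 := hφ
  constructor
  · calc |(φ : Fin d → ℝ) ⬝ᵥ Δ.mulVec φ| ≤ (d : ℝ) * ε * (‖φ‖ * ‖φ‖) := key φ φ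
      _ ≤ (d : ℝ) * ε * (1 * 1) := by
          apply mul_le_mul_of_nonneg_left _ (by positivity)
          exact mul_le_mul hφn hφn (norm_nonneg _) zero_le_one
      _ = (d : ℝ) * ε := by ring
  · -- inverse bound
    have hAdet : IsUnit A.det := hApd.det_pos.ne'.isUnit
    have hBdet : IsUnit B.det := hBpd.det_pos.ne'.isUnit
    -- B⁻¹ - A⁻¹ = -(B⁻¹ * Δ * A⁻¹)
    have hid : B⁻¹ - A⁻¹ = -(B⁻¹ * Δ * A⁻¹) := by
      have hΔeq : B - A = Δ := by rw [hB]; abel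
      rw [← hΔeq, Matrix.mul_sub, Matrix.sub_mul, Matrix.nonsing_inv_mul _ hBdet,
        Matrix.one_mul, Matrix.mul_assoc B⁻¹ A A⁻¹, Matrix.mul_nonsing_inv _ hAdet,
        Matrix.mul_one]
      abel
    set u : EuclideanSpace ℝ (Fin d) := WithLp.toLp 2 (A⁻¹.mulVec φ : Fin d → ℝ) with hu
    set w : EuclideanSpace ℝ (Fin d) := WithLp.toLp 2 (B⁻¹.mulVec φ : Fin d → ℝ) with hw
    -- norm bounds on u and w
    have hAu : A.mulVec (u : Fin d → ℝ) = (φ : Fin d → ℝ) := by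
      rw [hu, mulVec_mulVec, Matrix.mul_nonsing_inv _ hAdet, one_mulVec]
    have hBw : B.mulVec (w : Fin d → ℝ) = (φ : Fin d → ℝ) := by
      rw [hw, mulVec_mulVec, Matrix.mul_nonsing_inv _ hBdet, one_mulVec]
    have hun : ‖u‖ ≤ 1 := by
      have h1 := hAq u
      rw [hAu] at h1
      have h2 := abs_dot_le u φ
      have h3 : (u : Fin d → ℝ) ⬝ᵥ (φ : Fin d → ℝ) ≤ ‖u‖ * ‖φ‖ := le_of_abs_le h2
      nlinarith [norm_nonneg u, norm_nonneg φ]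
    have hwn : ‖w‖ ≤ 1 / (1 - (d : ℝ) * ε) := by
      have h1 := hBq w
      rw [hBw] at h1
      have h3 : (w : Fin d → ℝ) ⬝ᵥ (φ : Fin d → ℝ) ≤ ‖w‖ * ‖φ‖ := le_of_abs_le (abs_dot_le w φ)
      rw [le_div_iff₀ hpos]
      nlinarith [norm_nonneg w, norm_nonneg φ]
    -- rewrite the quadratic form
    have hBsymm : Bᵀ = B := by rw [hB, transpose_add, hAsymm, hΔsymm]
    have hBinvsymm : B⁻¹ᵀ = B⁻¹ := by rw [transpose_nonsing_inv, hBsymm]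
    have hmain : (φ : Fin d → ℝ) ⬝ᵥ (B⁻¹ - A⁻¹).mulVec φ
        = -((w : Fin d → ℝ) ⬝ᵥ Δ.mulVec u) := by
      rw [hid, neg_mulVec, dotProduct_neg, neg_inj]
      rw [Matrix.mul_assoc, ← mulVec_mulVec]
      rw [dotProduct_mulVec, ← mulVec_transpose, hBinvsymm]
      rw [← mulVec_mulVec]
    rw [hmain, abs_neg]
    calc |(w : Fin d → ℝ) ⬝ᵥ Δ.mulVec u| ≤ (d : ℝ) * ε * (‖w‖ * ‖u‖) := key w u
      _ ≤ (d : ℝ) * ε * ((1 / (1 - (d : ℝ) * ε)) * 1) := by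
          apply mul_le_mul_of_nonneg_left _ (by positivity)
          exact mul_le_mul hwn hun (norm_nonneg _) (by positivity)
      _ = (d : ℝ) * ε / (1 - (d : ℝ) * ε) := by field_simp
end

section
/- Let λ > 0 and let A be a real symmetric d×d matrix such that A − λI is positive semidefinite. Then for every c > 0, every real n ≥ 1, and every φ ∈ ℝ^d with ‖φ‖ ≤ 1, φᵀ (cI + nA)^{-1} φ ≤ ((λ + c)/(λn + c)) · φᵀ (cI + A)^{-1} φ. -/
open Matrix
open scoped MatrixOrder

section Aux

variable {d : ℕ}

private lemma psd_smul {M : Matrix (Fin d) (Fin d) ℝ} (hM : M.PosSemidef) {r : ℝ} (hr : 0 ≤ r) :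
    (r • M).PosSemidef := by
  refine ⟨?_, fun x => ?_⟩
  · unfold Matrix.IsHermitian
    rw [conjTranspose_smul, hM.1]
    simp
  · exact (hM.smul hr).2 x

private lemma smul_one_posDef {r : ℝ} (hr : 0 < r) :
    (r • (1 : Matrix (Fin d) (Fin d) ℝ)).PosDef := by
  rw [smul_one_eq_diagonal]
  exact posDef_diagonal_iff.2 fun _ => hr

private lemma commute_inv {X Y : Matrix (Fin d) (Fin d) ℝ} (hY : IsUnit Y.det)
    (h : X * Y = Y * X) : X * Y⁻¹ = Y⁻¹ * X := by
  calc X * Y⁻¹ = Y⁻¹ * Y * (X * Y⁻¹) := by rw [nonsing_inv_mul _ hY, one_mul]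
    _ = Y⁻¹ * (Y * X) * Y⁻¹ := by simp only [mul_assoc]
    _ = Y⁻¹ * (X * Y) * Y⁻¹ := by rw [h]
    _ = Y⁻¹ * X * (Y * Y⁻¹) := by simp only [mul_assoc]
    _ = Y⁻¹ * X := by rw [mul_nonsing_inv _ hY, mul_one]

end Aux

set_option maxHeartbeats 1000000 in
/-- If `A ⪰ λ I` with `λ > 0`, then for every `c > 0`, real `n ≥ 1`, and unit-norm
vector `φ`, `φᵀ(cI + nA)⁻¹φ ≤ ((λ + c)/(λ n + c)) · φᵀ(cI + A)⁻¹φ`. -/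
theorem quadForm_inv_smul_le
    (d : ℕ) (lam : ℝ) (hlam : 0 < lam)
    (A : Matrix (Fin d) (Fin d) ℝ)
    (hAsymm : A.IsSymm)
    (hA : (A - lam • (1 : Matrix (Fin d) (Fin d) ℝ)).PosSemidef) :
    ∀ c : ℝ, 0 < c → ∀ n : ℝ, 1 ≤ n →
      ∀ φ : EuclideanSpace ℝ (Fin d), ‖φ‖ ≤ 1 →
        φ ⬝ᵥ ((c • (1 : Matrix (Fin d) (Fin d) ℝ) + n • A)⁻¹).mulVec φ ≤
          ((lam + c) / (lam * n + c)) *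
            (φ ⬝ᵥ ((c • (1 : Matrix (Fin d) (Fin d) ℝ) + A)⁻¹).mulVec φ) := by
  intro c hc n hn φ _
  have hn0 : (0:ℝ) < n := lt_of_lt_of_le one_pos hn
  have hden : (0:ℝ) < lam * n + c := by nlinarith
  set S : Matrix (Fin d) (Fin d) ℝ := CFC.sqrt (A - lam • 1) with hSdef
  have hS : S.PosSemidef := (CFC.sqrt_nonneg _).posSemidef
  have hSS : S * S = A - lam • 1 := CFC.sqrt_mul_sqrt_self _ hA.nonneg
  have hSH : Sᴴ = S := hS.isHermitian
  have hA' : A = lam • 1 + S * S := by rw [hSS]; abel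
  set B : Matrix (Fin d) (Fin d) ℝ := c • 1 + n • A with hBdef
  set C : Matrix (Fin d) (Fin d) ℝ := c • 1 + A with hCdef
  set k : ℝ := (lam + c) / (lam * n + c) with hk
  set t : ℝ := c * (n - 1) / (lam * n + c) with ht
  have ht0 : 0 ≤ t := by
    apply div_nonneg _ hden.le
    nlinarith
  -- positive definiteness
  have hSS_psd : (S * S).PosSemidef := by
    have h := posSemidef_conjTranspose_mul_self S
    rwa [hSH] at h
  have hBd : B = (c + n * lam) • (1 : Matrix (Fin d) (Fin d) ℝ) + n • (S * S) := by
    rw [hBdef, hSS]; module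
  have hCd : C = (c + lam) • (1 : Matrix (Fin d) (Fin d) ℝ) + S * S := by
    rw [hCdef, hSS]; module
  have hB : B.PosDef := by
    rw [hBd]
    exact (smul_one_posDef (by nlinarith)).add_posSemidef (psd_smul hSS_psd hn0.le)
  have hC : C.PosDef := by
    rw [hCd]
    exact (smul_one_posDef (by nlinarith)).add_posSemidef hSS_psd
  have hBdet : IsUnit B.det := (isUnit_iff_isUnit_det B).1 hB.isUnit
  have hCdet : IsUnit C.det := (isUnit_iff_isUnit_det C).1 hC.isUnit
  -- commutation of S with B⁻¹ and C⁻¹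
  have hSA : S * A = A * S := by
    rw [hA']
    simp only [mul_add, add_mul, mul_smul_comm, smul_mul_assoc, mul_one, one_mul, mul_assoc]
  have hSB : S * B = B * S := by
    rw [hBdef]
    simp only [mul_add, add_mul, mul_smul_comm, smul_mul_assoc, mul_one, one_mul, hSA]
  have hSC : S * C = C * S := by
    rw [hCdef]
    simp only [mul_add, add_mul, mul_smul_comm, smul_mul_assoc, mul_one, one_mul, hSA]
  have hSBi : S * B⁻¹ = B⁻¹ * S := commute_inv hBdet hSB
  have hSCi : S * C⁻¹ = C⁻¹ * S := commute_inv hCdet hSC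
  -- B*C is PSD, hence (B*C)⁻¹ is PSD
  have hBC : B * C = ((c + n * lam) * (c + lam)) • (1 : Matrix (Fin d) (Fin d) ℝ)
      + ((c + n * lam) + n * (c + lam)) • (S * S) + n • ((S * S) * (S * S)) := by
    rw [hBd, hCd]
    simp only [mul_add, add_mul, smul_mul_assoc, mul_smul_comm, smul_smul, mul_one, one_mul,
      smul_add]
    module
  have hBC_psd : (B * C).PosSemidef := by
    rw [hBC]
    refine ((psd_smul Matrix.PosSemidef.one (by nlinarith)).add
      (psd_smul hSS_psd (by nlinarith))).add (psd_smul ?_ hn0.le)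
    have h := posSemidef_conjTranspose_mul_self (S * S)
    rwa [conjTranspose_mul, hSH] at h
  have hBCinv : ((B * C)⁻¹).PosSemidef := hBC_psd.inv
  -- key identity
  have e1 : k • C⁻¹ - B⁻¹ = C⁻¹ * (k • B - C) * B⁻¹ := by
    symm
    calc C⁻¹ * (k • B - C) * B⁻¹
        = (k • (C⁻¹ * B) - 1) * B⁻¹ := by
          rw [mul_sub, mul_smul_comm, nonsing_inv_mul _ hCdet]
      _ = k • (C⁻¹ * (B * B⁻¹)) - B⁻¹ := by
          rw [sub_mul, smul_mul_assoc, one_mul, mul_assoc]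
      _ = k • C⁻¹ - B⁻¹ := by rw [mul_nonsing_inv _ hBdet, mul_one]
  have e2 : k • B - C = t • (S * S) := by
    rw [hBdef, hCdef, hSS, hk, ht]
    match_scalars <;> field_simp <;> ring
  have e3 : C⁻¹ * (S * S) * B⁻¹ = S * (B * C)⁻¹ * S := by
    rw [Matrix.mul_inv_rev]
    calc C⁻¹ * (S * S) * B⁻¹ = (C⁻¹ * S) * (S * B⁻¹) := by simp only [mul_assoc]
      _ = (S * C⁻¹) * (B⁻¹ * S) := by rw [hSCi, hSBi]
      _ = S * (C⁻¹ * B⁻¹) * S := by simp only [mul_assoc]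
  have main : k • C⁻¹ - B⁻¹ = t • (S * (B * C)⁻¹ * S) := by
    rw [e1, e2, ← e3]
    rw [mul_smul_comm, smul_mul_assoc]
  have hP : (k • C⁻¹ - B⁻¹).PosSemidef := by
    rw [main]
    refine psd_smul ?_ ht0
    have := hBCinv.conjTranspose_mul_mul_same S
    rwa [hSH] at this
  have h0 := hP.dotProduct_mulVec_nonneg (WithLp.ofLp φ)
  rw [sub_mulVec, smul_mulVec, dotProduct_sub, dotProduct_smul, star_trivial,
    smul_eq_mul] at h0
  linarith
end

section
/- Let S be a nonempty set, 𝒜 a finite nonempty set, and φ : S × 𝒜 → ℝ^d a map with ‖φ(s,a)‖ ≤ 1 for all (s,a). Let ε₀ > 0, let w, w̄ ∈ ℝ^d satisfy ‖w − w̄‖ ≤ ε₀/2, and let Σ, Σ̄ be real symmetric positive semidefinite d×d matrices with ‖Σ − Σ̄‖_F ≤ ε₀²/4. Define Q(s,a) = min{ wᵀφ(s,a) + √(φ(s,a)ᵀ Σ φ(s,a)), 1 } and Q̄(s,a) = min{ w̄ᵀφ(s,a) + √(φ(s,a)ᵀ Σ̄ φ(s,a)), 1 }, and for each s ∈ S let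 π(s) ∈ 𝒜 maximize a ↦ Q(s,a) and π̄(s) ∈ 𝒜 maximize a ↦ Q̄(s,a). Then: (i) |Q(s,a) − Q̄(s,a)| ≤ ε₀ for all (s,a); (ii) |max_{a} Q(s,a) − max_{a} Q̄(s,a)| ≤ ε₀ for all s; and (iii) |Q(s,π(s)) − Q(s,π̄(s))| ≤ 2ε₀ for all s ∈ S. -/
open Matrix

lemma sqrt_abs_sub_le (a b : ℝ) (ha : 0 ≤ a) (hb : 0 ≤ b) :
    |Real.sqrt a - Real.sqrt b| ≤ Real.sqrt |a - b| := by
  have key : ∀ u v : ℝ, 0 ≤ u → 0 ≤ v → v ≤ u →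
      Real.sqrt u - Real.sqrt v ≤ Real.sqrt (u - v) := by
    intro u v hu hv huv
    have h1 : Real.sqrt u ≤ Real.sqrt v + Real.sqrt (u - v) := by
      have h2 : u ≤ (Real.sqrt v + Real.sqrt (u - v)) ^ 2 := by
        have := Real.sq_sqrt hv
        have := Real.sq_sqrt (sub_nonneg.2 huv)
        nlinarith [mul_nonneg (Real.sqrt_nonneg v) (Real.sqrt_nonneg (u - v))]
      calc Real.sqrt u ≤ Real.sqrt ((Real.sqrt v + Real.sqrt (u - v)) ^ 2) :=
            Real.sqrt_le_sqrt h2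
        _ = Real.sqrt v + Real.sqrt (u - v) := Real.sqrt_sq (by positivity)
    linarith
  rcases le_total b a with h | h
  · rw [abs_of_nonneg (sub_nonneg.2 h),
      abs_of_nonneg (sub_nonneg.2 (Real.sqrt_le_sqrt h))]
    exact key a b ha hb h
  · rw [abs_of_nonpos (sub_nonpos.2 h),
      abs_of_nonpos (sub_nonpos.2 (Real.sqrt_le_sqrt h)), neg_sub, neg_sub]
    exact key b a hb ha h

lemma quad_form_bound (d : ℕ) (N : Matrix (Fin d) (Fin d) ℝ) (x : Fin d → ℝ)
    (hx : ∑ i, x i ^ 2 ≤ 1) :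
    |x ⬝ᵥ N.mulVec x| ≤ Real.sqrt (∑ i, ∑ j, (N i j) ^ 2) := by
  have hrw : x ⬝ᵥ N.mulVec x
      = ∑ p : Fin d × Fin d, N p.1 p.2 * (x p.1 * x p.2) := by
    rw [Fintype.sum_prod_type]
    simp only [dotProduct, Matrix.mulVec, dotProduct, Finset.mul_sum]
    exact Finset.sum_congr rfl fun i _ => Finset.sum_congr rfl fun j _ => by ring
  have hSx : (0:ℝ) ≤ ∑ i, x i ^ 2 := Finset.sum_nonneg fun i _ => sq_nonneg _
  have hCS := Finset.sum_mul_sq_le_sq_mul_sq Finset.univ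
    (fun p : Fin d × Fin d => N p.1 p.2) (fun p : Fin d × Fin d => x p.1 * x p.2)
  have hg : ∑ p : Fin d × Fin d, (x p.1 * x p.2) ^ 2 = (∑ i, x i ^ 2) ^ 2 := by
    rw [Fintype.sum_prod_type, sq, Finset.sum_mul_sum]
    exact Finset.sum_congr rfl fun i _ => Finset.sum_congr rfl fun j _ => by ring
  have hf : ∑ p : Fin d × Fin d, (N p.1 p.2) ^ 2 = ∑ i, ∑ j, (N i j) ^ 2 := by
    rw [Fintype.sum_prod_type]
  rw [hrw]
  have habs : |∑ p : Fin d × Fin d, N p.1 p.2 * (x p.1 * x p.2)|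
      ≤ Real.sqrt (∑ i, ∑ j, (N i j)^2) * (∑ i, x i ^ 2) := by
    rw [← Real.sqrt_sq (abs_nonneg _)]
    have h1 : |∑ p : Fin d × Fin d, N p.1 p.2 * (x p.1 * x p.2)| ^ 2
        ≤ (∑ i, ∑ j, (N i j)^2) * (∑ i, x i ^ 2) ^ 2 := by
      rw [sq_abs]
      calc (∑ p : Fin d × Fin d, N p.1 p.2 * (x p.1 * x p.2)) ^ 2
          ≤ (∑ p : Fin d × Fin d, (N p.1 p.2)^2)
            * (∑ p : Fin d × Fin d, (x p.1 * x p.2)^2) := hCS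
        _ = (∑ i, ∑ j, (N i j)^2) * (∑ i, x i ^ 2) ^ 2 := by rw [hf, hg]
    calc Real.sqrt (|∑ p : Fin d × Fin d, N p.1 p.2 * (x p.1 * x p.2)| ^ 2)
        ≤ Real.sqrt ((∑ i, ∑ j, (N i j)^2) * (∑ i, x i ^ 2) ^ 2) :=
          Real.sqrt_le_sqrt h1
      _ = Real.sqrt (∑ i, ∑ j, (N i j)^2) * (∑ i, x i ^ 2) := by
          rw [Real.sqrt_mul (by positivity), Real.sqrt_sq hSx]
  calc |∑ p : Fin d × Fin d, N p.1 p.2 * (x p.1 * x p.2)|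
      ≤ Real.sqrt (∑ i, ∑ j, (N i j)^2) * (∑ i, x i ^ 2) := habs
    _ ≤ Real.sqrt (∑ i, ∑ j, (N i j)^2) * 1 :=
        mul_le_mul_of_nonneg_left hx (Real.sqrt_nonneg _)
    _ = Real.sqrt (∑ i, ∑ j, (N i j)^2) := mul_one _

/-- Discretization error for greedy Q-functions: if `‖w − w'‖ ≤ ε₀/2` and the
Frobenius distance between the PSD matrices `M` (playing the role of `Σ`) and `M'`
(playing the role of `Σ̄`) is at most `ε₀²/4`, then the clipped Q-functions
`Q(s,a) = min(wᵀφ(s,a) + √(φ(s,a)ᵀ M φ(s,a)), 1)` and its discretized counterpart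
`Q'` are `ε₀`-close, their maxima over actions are `ε₀`-close, and the greedy
policies `π`, `π'` satisfy `|Q(s,π(s)) − Q(s,π'(s))| ≤ 2ε₀`. -/
theorem discretized_Q_close
    (d : ℕ) (S : Type*) (A : Type*) [Nonempty S] [Fintype A] [Nonempty A]
    (φ : S × A → EuclideanSpace ℝ (Fin d))
    (hφ : ∀ p, ‖φ p‖ ≤ 1)
    (ε₀ : ℝ) (hε₀ : 0 < ε₀)
    (w w' : EuclideanSpace ℝ (Fin d)) (hw : ‖w - w'‖ ≤ ε₀ / 2)
    (M M' : Matrix (Fin d) (Fin d) ℝ)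
    (hMsymm : M.IsSymm) (hM : M.PosSemidef)
    (hM'symm : M'.IsSymm) (hM' : M'.PosSemidef)
    (hF : Real.sqrt (∑ i, ∑ j, (M i j - M' i j) ^ 2) ≤ ε₀ ^ 2 / 4)
    (Q Q' : S → A → ℝ)
    (hQ : ∀ s a, Q s a =
      min (w ⬝ᵥ φ (s, a) + Real.sqrt (φ (s, a) ⬝ᵥ M.mulVec (φ (s, a)))) 1)
    (hQ' : ∀ s a, Q' s a =
      min (w' ⬝ᵥ φ (s, a) + Real.sqrt (φ (s, a) ⬝ᵥ M'.mulVec (φ (s, a)))) 1)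
    (π π' : S → A)
    (hπ : ∀ s a, Q s a ≤ Q s (π s))
    (hπ' : ∀ s a, Q' s a ≤ Q' s (π' s)) :
    (∀ s a, |Q s a - Q' s a| ≤ ε₀) ∧
    (∀ s, |Q s (π s) - Q' s (π' s)| ≤ ε₀) ∧
    (∀ s, |Q s (π s) - Q s (π' s)| ≤ 2 * ε₀) := by
  have key : ∀ s a, |Q s a - Q' s a| ≤ ε₀ := by
    intro s a
    set x : EuclideanSpace ℝ (Fin d) := φ (s, a) with hxdef
    have hxnorm : ∑ i, x i ^ 2 ≤ 1 := by
      have h1 : ‖x‖ = Real.sqrt (∑ i, x i ^ 2) := by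
        rw [EuclideanSpace.norm_eq]
        congr 1
        exact Finset.sum_congr rfl fun i _ => by rw [Real.norm_eq_abs, sq_abs]
      have h2 : Real.sqrt (∑ i, x i ^ 2) ≤ 1 := h1 ▸ hφ (s, a)
      have hnn : (0:ℝ) ≤ ∑ i, x i ^ 2 := Finset.sum_nonneg fun i _ => sq_nonneg (x i)
      nlinarith [Real.sq_sqrt hnn, Real.sqrt_nonneg (∑ i, x i ^ 2)]
    -- linear part
    have hlin : |w ⬝ᵥ x - w' ⬝ᵥ x| ≤ ε₀ / 2 := by
      have h1 : w ⬝ᵥ x - w' ⬝ᵥ x = inner ℝ (w - w') x := by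
        rw [PiLp.inner_apply]
        simp [dotProduct, Finset.sum_sub_distrib, sub_mul]
        rw [← Finset.sum_sub_distrib]
        exact Finset.sum_congr rfl fun i _ => by ring
      rw [h1]
      calc |inner ℝ (w - w') x| ≤ ‖w - w'‖ * ‖x‖ := abs_real_inner_le_norm _ _
        _ ≤ (ε₀ / 2) * 1 := by
            apply mul_le_mul hw (hφ (s, a)) (norm_nonneg _) (by linarith)
        _ = ε₀ / 2 := mul_one _
    -- sqrt part
    have hA : (0:ℝ) ≤ x ⬝ᵥ M.mulVec x := by
      have := hM.dotProduct_mulVec_nonneg x.ofLp; simpa using this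
    have hB : (0:ℝ) ≤ x ⬝ᵥ M'.mulVec x := by
      have := hM'.dotProduct_mulVec_nonneg x.ofLp; simpa using this
    have hdiff : x ⬝ᵥ M.mulVec x - x ⬝ᵥ M'.mulVec x = x ⬝ᵥ (M - M').mulVec x := by
      rw [Matrix.sub_mulVec, dotProduct_sub]
    have hquad : |x ⬝ᵥ M.mulVec x - x ⬝ᵥ M'.mulVec x| ≤ ε₀ ^ 2 / 4 := by
      rw [hdiff]
      refine (quad_form_bound d (M - M') x hxnorm).trans ?_
      simpa [Matrix.sub_apply] using hF
    have hsqrt : |Real.sqrt (x ⬝ᵥ M.mulVec x) - Real.sqrt (x ⬝ᵥ M'.mulVec x)|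
        ≤ ε₀ / 2 := by
      refine (sqrt_abs_sub_le _ _ hA hB).trans ?_
      calc Real.sqrt |x ⬝ᵥ M.mulVec x - x ⬝ᵥ M'.mulVec x|
          ≤ Real.sqrt (ε₀ ^ 2 / 4) := Real.sqrt_le_sqrt hquad
        _ = ε₀ / 2 := by
            rw [show ε₀ ^ 2 / 4 = (ε₀ / 2) ^ 2 by ring, Real.sqrt_sq (by linarith)]
    rw [hQ, hQ']
    refine (abs_min_sub_min_le_max _ _ _ _).trans ?_
    apply max_le
    · calc |(w ⬝ᵥ x + Real.sqrt (x ⬝ᵥ M.mulVec x))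
            - (w' ⬝ᵥ x + Real.sqrt (x ⬝ᵥ M'.mulVec x))|
          ≤ |w ⬝ᵥ x - w' ⬝ᵥ x|
            + |Real.sqrt (x ⬝ᵥ M.mulVec x) - Real.sqrt (x ⬝ᵥ M'.mulVec x)| := by
            rw [show (w ⬝ᵥ x + Real.sqrt (x ⬝ᵥ M.mulVec x))
              - (w' ⬝ᵥ x + Real.sqrt (x ⬝ᵥ M'.mulVec x))
              = (w ⬝ᵥ x - w' ⬝ᵥ x)
                + (Real.sqrt (x ⬝ᵥ M.mulVec x) - Real.sqrt (x ⬝ᵥ M'.mulVec x)) by ring]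
            exact abs_add_le _ _
        _ ≤ ε₀ / 2 + ε₀ / 2 := add_le_add hlin hsqrt
        _ = ε₀ := by ring
    · simpa using hε₀.le
  refine ⟨key, ?_, ?_⟩
  · intro s
    have h1 := key s (π s)
    have h2 := key s (π' s)
    have h3 := hπ s (π' s)
    have h4 := hπ' s (π s)
    rw [abs_le] at h1 h2 ⊢
    constructor <;> [linarith [h2.1]; linarith [h1.2]]
  · intro s
    have h1 := key s (π s)
    have h2 := key s (π' s)
    have h3 := hπ s (π' s)
    have h4 := hπ' s (π s)
    rw [abs_le] at h1 h2 ⊢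
    constructor <;> [linarith [h2.1, h1.2]; linarith [h1.2, h2.1]]
end

section
/- Let c > 0, let A be a real symmetric positive semidefinite d×d matrix, and let P be a nonempty family of Borel probability measures on ℝ^d, each supported on the closed unit ball {φ : ‖φ‖ ≤ 1}. Define ν = inf_{θ ∈ ℝ^d, ‖θ‖ = 1} sup_{μ ∈ P} √( ∫ (φᵀθ)² dμ(φ) ). Suppose ε̃ > 0 satisfies sup_{μ ∈ P} ∫ √( φᵀ (cI + A)^{-1} φ ) dμ(φ) ≤ ε̃ and ε̃ ≤ ν²/(2√c). Then for every real n ≥ 1, sup_{μ ∈ P} ∫ √( φᵀ (cI + nA)^{-1} φ ) dμ(φ) ≤ √( 2·ε̃/( √c · (1 + n) ) ). -/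
open Matrix MeasureTheory

section RbuHelpers

lemma rbu_psd_CS {d : ℕ} {B : Matrix (Fin d) (Fin d) ℝ} (hB : B.PosSemidef)
    (u y : Fin d → ℝ) :
    (u ⬝ᵥ B.mulVec y) ^ 2 ≤ (u ⬝ᵥ B.mulVec u) * (y ⬝ᵥ B.mulVec y) := by
  have hsymm : ∀ a b : Fin d → ℝ, a ⬝ᵥ B.mulVec b = b ⬝ᵥ B.mulVec a := by
    intro a b
    have hB' : Bᵀ = B := by
      rw [← Matrix.conjTranspose_eq_transpose_of_trivial, hB.isHermitian.eq]
    calc a ⬝ᵥ B.mulVec b = B.vecMul a ⬝ᵥ b := by rw [Matrix.dotProduct_mulVec]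
      _ = Bᵀ.mulVec a ⬝ᵥ b := by rw [Matrix.mulVec_transpose]
      _ = B.mulVec a ⬝ᵥ b := by rw [hB']
      _ = b ⬝ᵥ B.mulVec a := dotProduct_comm _ _
  have key : ∀ r : ℝ, 0 ≤ (y ⬝ᵥ B.mulVec y) * (r * r)
      + (2 * (u ⬝ᵥ B.mulVec y)) * r + (u ⬝ᵥ B.mulVec u) := by
    intro r
    have h0 := hB.dotProduct_mulVec_nonneg (u + r • y)
    simp only [star_trivial, Matrix.mulVec_add, Matrix.mulVec_smul, dotProduct_add,
      add_dotProduct, dotProduct_smul, smul_dotProduct, smul_eq_mul,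
      hsymm y u] at h0
    nlinarith [h0]
  have hd := discrim_le_zero key
  simp only [discrim] at hd
  nlinarith [hd]

lemma rbu_inv_apply {d : ℕ} {B : Matrix (Fin d) (Fin d) ℝ} (hB : B.PosDef)
    (x : Fin d → ℝ) : B.mulVec (B⁻¹.mulVec x) = x := by
  rw [Matrix.mulVec_mulVec, Matrix.mul_nonsing_inv _ (isUnit_iff_ne_zero.mpr hB.det_pos.ne'),
    Matrix.one_mulVec]

lemma rbu_inv_apply' {d : ℕ} {B : Matrix (Fin d) (Fin d) ℝ} (hB : B.PosDef)
    (x : Fin d → ℝ) : B⁻¹.mulVec (B.mulVec x) = x := by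
  rw [Matrix.mulVec_mulVec, Matrix.nonsing_inv_mul _ (isUnit_iff_ne_zero.mpr hB.det_pos.ne'),
    Matrix.one_mulVec]

lemma rbu_inv_quad_mono {d : ℕ} {B C : Matrix (Fin d) (Fin d) ℝ}
    (hB : B.PosDef) (hC : C.PosDef)
    (h : ∀ u : Fin d → ℝ, u ⬝ᵥ B.mulVec u ≤ u ⬝ᵥ C.mulVec u) (x : Fin d → ℝ) :
    x ⬝ᵥ C⁻¹.mulVec x ≤ x ⬝ᵥ B⁻¹.mulVec x := by
  set u := C⁻¹.mulVec x with hu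
  set y := B⁻¹.mulVec x with hy
  have hCu : C.mulVec u = x := rbu_inv_apply hC x
  have hBy : B.mulVec y = x := rbu_inv_apply hB x
  have hs : u ⬝ᵥ B.mulVec y = x ⬝ᵥ C⁻¹.mulVec x := by
    rw [hBy, ← hu, dotProduct_comm]
  have ht : y ⬝ᵥ B.mulVec y = x ⬝ᵥ B⁻¹.mulVec x := by
    rw [hBy, ← hy, dotProduct_comm]
  have huu : u ⬝ᵥ B.mulVec u ≤ x ⬝ᵥ C⁻¹.mulVec x := by
    have h1 := h u
    have h2 : u ⬝ᵥ C.mulVec u = x ⬝ᵥ C⁻¹.mulVec x := by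
      rw [hCu, ← hu, dotProduct_comm]
    linarith
  have hCS := rbu_psd_CS hB.posSemidef u y
  rw [hs, ht] at hCS
  have hspos : 0 ≤ x ⬝ᵥ C⁻¹.mulVec x := by simpa using hC.inv.posSemidef.dotProduct_mulVec_nonneg x
  have htpos : 0 ≤ x ⬝ᵥ B⁻¹.mulVec x := by simpa using hB.inv.posSemidef.dotProduct_mulVec_nonneg x
  rcases eq_or_lt_of_le hspos with hz | hz
  · linarith
  · nlinarith [hCS, huu, hz]

lemma rbu_quad_eq {d : ℕ} (c t : ℝ) (A : Matrix (Fin d) (Fin d) ℝ) (x : Fin d → ℝ) :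
    x ⬝ᵥ ((c • (1 : Matrix (Fin d) (Fin d) ℝ) + t • A).mulVec x)
      = c * (x ⬝ᵥ x) + t * (x ⬝ᵥ A.mulVec x) := by
  simp [Matrix.add_mulVec, Matrix.smul_mulVec, dotProduct_add,
    dotProduct_smul, Matrix.one_mulVec, smul_eq_mul]

lemma rbu_posdef {d : ℕ} {c t : ℝ} (hc : 0 < c) (ht : 0 ≤ t)
    {A : Matrix (Fin d) (Fin d) ℝ} (hA : A.PosSemidef) :
    (c • (1 : Matrix (Fin d) (Fin d) ℝ) + t • A).PosDef := by
  refine Matrix.PosDef.of_dotProduct_mulVec_pos ?_ ?_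
  · have h1 : (c • (1 : Matrix (Fin d) (Fin d) ℝ))ᴴ = c • 1 := by
      simp [Matrix.conjTranspose_smul]
    have hAt : Aᵀ = A := by
      rw [← Matrix.conjTranspose_eq_transpose_of_trivial, hA.isHermitian.eq]
    have h2 : (t • A)ᴴ = t • A := by
      simp [Matrix.conjTranspose_smul, hAt]
    simpa [Matrix.IsHermitian, Matrix.conjTranspose_add] using congrArg₂ (· + ·) h1 h2
  · intro x hx
    have h1 : 0 < x ⬝ᵥ x := by
      have := Matrix.dotProduct_self_star_pos_iff (v := x)
      simp only [star_trivial] at this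
      exact this.mpr hx
    have h2 : 0 ≤ x ⬝ᵥ A.mulVec x := by simpa using hA.dotProduct_mulVec_nonneg x
    simp only [star_trivial, rbu_quad_eq]
    nlinarith

lemma rbu_cont {d : ℕ} (M : Matrix (Fin d) (Fin d) ℝ) :
    Continuous fun φ : EuclideanSpace ℝ (Fin d) => (φ : Fin d → ℝ) ⬝ᵥ M.mulVec φ := by
  simp only [dotProduct, Matrix.mulVec]
  fun_prop

lemma rbu_abs_dot_le {d : ℕ} (x y : EuclideanSpace ℝ (Fin d)) :
    |(x : Fin d → ℝ) ⬝ᵥ (y : Fin d → ℝ)| ≤ ‖x‖ * ‖y‖ := by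
  have h := EuclideanSpace.inner_eq_star_dotProduct x y
  simp only [star_trivial] at h
  have h2 := abs_real_inner_le_norm x y
  rw [h, dotProduct_comm] at h2
  exact h2

lemma rbu_dot_self {d : ℕ} (x : EuclideanSpace ℝ (Fin d)) :
    (x : Fin d → ℝ) ⬝ᵥ (x : Fin d → ℝ) = ‖x‖ ^ 2 := by
  have h := EuclideanSpace.inner_eq_star_dotProduct x x
  simp only [star_trivial] at h
  rw [← real_inner_self_eq_norm_sq]
  exact h.symm

lemma rbu_ae_ball {d : ℕ} (μ : Measure (EuclideanSpace ℝ (Fin d)))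
    [IsProbabilityMeasure μ] (hsupp : μ {φ | ‖φ‖ ≤ 1} = 1) :
    ∀ᵐ φ ∂μ, ‖φ‖ ≤ 1 := by
  have hm : MeasurableSet {φ : EuclideanSpace ℝ (Fin d) | ‖φ‖ ≤ 1} :=
    (isClosed_le continuous_norm continuous_const).measurableSet
  have := (prob_compl_eq_zero_iff hm).mpr hsupp
  rw [ae_iff]
  simpa [Set.compl_setOf] using this

lemma rbu_quad_bound {d : ℕ} (M : Matrix (Fin d) (Fin d) ℝ)
    (φ : EuclideanSpace ℝ (Fin d)) (hφ : ‖φ‖ ≤ 1) :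
    |(φ : Fin d → ℝ) ⬝ᵥ M.mulVec φ| ≤ ∑ i, ∑ j, |M i j| := by
  have hcoord : ∀ i, |(φ : Fin d → ℝ) i| ≤ 1 := by
    intro i
    calc |(φ : Fin d → ℝ) i| ≤ ‖φ‖ := by
          rw [EuclideanSpace.norm_eq, ← Real.sqrt_sq_eq_abs]
          apply Real.sqrt_le_sqrt
          exact Finset.single_le_sum (f := fun j => |(φ : Fin d → ℝ) j| ^ 2)
            (fun j _ => sq_nonneg _) (Finset.mem_univ i) |>.trans_eq' (by rw [sq_abs])
      _ ≤ 1 := hφ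
  calc |(φ : Fin d → ℝ) ⬝ᵥ M.mulVec φ|
      = |∑ i, (φ : Fin d → ℝ) i * ∑ j, M i j * (φ : Fin d → ℝ) j| := rfl
    _ ≤ ∑ i, |(φ : Fin d → ℝ) i * ∑ j, M i j * (φ : Fin d → ℝ) j| :=
        Finset.abs_sum_le_sum_abs _ _
    _ ≤ ∑ i, ∑ j, |M i j| := by
        apply Finset.sum_le_sum
        intro i _
        rw [abs_mul]
        calc |(φ : Fin d → ℝ) i| * |∑ j, M i j * (φ : Fin d → ℝ) j|
            ≤ 1 * ∑ j, |M i j| := by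
              apply mul_le_mul (hcoord i) ?_ (abs_nonneg _) zero_le_one
              calc |∑ j, M i j * (φ : Fin d → ℝ) j| ≤ ∑ j, |M i j * (φ : Fin d → ℝ) j| :=
                    Finset.abs_sum_le_sum_abs _ _
                _ ≤ ∑ j, |M i j| := by
                    apply Finset.sum_le_sum
                    intro j _
                    rw [abs_mul]
                    nlinarith [hcoord j, abs_nonneg (M i j), abs_nonneg ((φ : Fin d → ℝ) j)]
          _ = ∑ j, |M i j| := one_mul _

lemma rbu_integrable {d : ℕ} (M : Matrix (Fin d) (Fin d) ℝ)
    (μ : Measure (EuclideanSpace ℝ (Fin d))) [IsProbabilityMeasure μ]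
    (hsupp : μ {φ | ‖φ‖ ≤ 1} = 1) :
    Integrable (fun φ : EuclideanSpace ℝ (Fin d) =>
      Real.sqrt ((φ : Fin d → ℝ) ⬝ᵥ M.mulVec φ)) μ := by
  apply Integrable.mono' (integrable_const (Real.sqrt (∑ i, ∑ j, |M i j|)))
  · exact (Real.continuous_sqrt.comp (rbu_cont M)).aestronglyMeasurable
  · filter_upwards [rbu_ae_ball μ hsupp] with φ hφ
    rw [Real.norm_eq_abs, abs_of_nonneg (Real.sqrt_nonneg _)]
    apply Real.sqrt_le_sqrt
    exact le_trans (le_abs_self _) (rbu_quad_bound M φ hφ)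

end RbuHelpers

set_option maxHeartbeats 2000000 in
/-- Reachability amplification: let `P` be a nonempty family of probability measures
on the unit ball of `ℝ^d`, `A ⪰ 0` symmetric, `c > 0`, and let
`ν = inf_{‖θ‖=1} sup_{μ ∈ P} √(∫ (φᵀθ)² dμ)` be the reachability coefficient.
If every `μ ∈ P` satisfies `∫ √(φᵀ(cI + A)⁻¹φ) dμ ≤ ε̃` and `ε̃ ≤ ν²/(2√c)`, then
for every real `n ≥ 1` and every `μ ∈ P`,
`∫ √(φᵀ(cI + nA)⁻¹φ) dμ ≤ √(2 ε̃ / (√c (1 + n)))`. -/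
theorem reachability_blow_up
    (d : ℕ) (c : ℝ) (hc : 0 < c)
    (A : Matrix (Fin d) (Fin d) ℝ) (hAsymm : A.IsSymm) (hA : A.PosSemidef)
    (P : Set (Measure (EuclideanSpace ℝ (Fin d)))) (hPne : P.Nonempty)
    (hprob : ∀ μ ∈ P, IsProbabilityMeasure μ)
    (hsupp : ∀ μ ∈ P, μ {φ | ‖φ‖ ≤ 1} = 1)
    (ν : ℝ)
    (hν : ν = ⨅ θ : {θ : EuclideanSpace ℝ (Fin d) // ‖θ‖ = 1},
        ⨆ μ : P, Real.sqrt (∫ φ, ((φ : EuclideanSpace ℝ (Fin d)) ⬝ᵥ (θ : Fin d → ℝ)) ^ 2 ∂(μ : Measure (EuclideanSpace ℝ (Fin d)))))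
    (ε' : ℝ) (hε'pos : 0 < ε')
    (hε' : ∀ μ ∈ P, (∫ φ, Real.sqrt
        (φ ⬝ᵥ ((c • (1 : Matrix (Fin d) (Fin d) ℝ) + A)⁻¹).mulVec φ) ∂μ) ≤ ε')
    (hε'ν : ε' ≤ ν ^ 2 / (2 * Real.sqrt c)) :
    ∀ n : ℝ, 1 ≤ n → ∀ μ ∈ P,
      (∫ φ, Real.sqrt
          (φ ⬝ᵥ ((c • (1 : Matrix (Fin d) (Fin d) ℝ) + n • A)⁻¹).mulVec φ) ∂μ) ≤
        Real.sqrt (2 * ε' / (Real.sqrt c * (1 + n))) := by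
  have hsqc : 0 < Real.sqrt c := Real.sqrt_pos.mpr hc
  -- The unit sphere is nonempty, otherwise ν = 0 and ε' ≤ 0.
  by_cases hemp : IsEmpty {θ : EuclideanSpace ℝ (Fin d) // ‖θ‖ = 1}
  · exfalso
    have hν0 : ν = 0 := by
      rw [hν, iInf_of_isEmpty, Real.sInf_empty]
    rw [hν0] at hε'ν
    simp at hε'ν
    linarith
  haveI hne : Nonempty {θ : EuclideanSpace ℝ (Fin d) // ‖θ‖ = 1} := not_isEmpty_iff.mp hemp
  haveI hPne' : Nonempty ↥P := hPne.to_subtype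
  set M₁ : Matrix (Fin d) (Fin d) ℝ := c • (1 : Matrix (Fin d) (Fin d) ℝ) + A with hM₁def
  have hM₁eq : M₁ = c • (1 : Matrix (Fin d) (Fin d) ℝ) + (1 : ℝ) • A := by
    rw [hM₁def, one_smul]
  have hM₁ : M₁.PosDef := by rw [hM₁eq]; exact rbu_posdef hc zero_le_one hA
  clear_value M₁
  -- boundedness facts about the iInf/iSup
  have hbdd : BddBelow (Set.range fun θ : {θ : EuclideanSpace ℝ (Fin d) // ‖θ‖ = 1} =>
      ⨆ μ : P, Real.sqrt (∫ φ, ((φ : EuclideanSpace ℝ (Fin d)) ⬝ᵥ (θ : Fin d → ℝ)) ^ 2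
        ∂(μ : Measure (EuclideanSpace ℝ (Fin d))))) := by
    refine ⟨0, ?_⟩
    rintro x ⟨θ, rfl⟩
    exact Real.iSup_nonneg fun _ => Real.sqrt_nonneg _
  have hνnonneg : 0 ≤ ν := by
    rw [hν]
    exact le_ciInf fun θ => Real.iSup_nonneg fun _ => Real.sqrt_nonneg _
  have hνpos : 0 < ν := by
    rcases lt_or_eq_of_le hνnonneg with h | h
    · exact h
    · exfalso; rw [← h] at hε'ν; simp at hε'ν; linarith
  -- ν ≤ 1
  have hν1 : ν ≤ 1 := by
    obtain ⟨θ₀⟩ := hne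
    have h1 : ν ≤ ⨆ μ : P, Real.sqrt (∫ φ, ((φ : EuclideanSpace ℝ (Fin d)) ⬝ᵥ ((θ₀ : EuclideanSpace ℝ (Fin d)) : Fin d → ℝ)) ^ 2
        ∂(μ : Measure (EuclideanSpace ℝ (Fin d)))) := hν ▸ ciInf_le hbdd θ₀
    refine h1.trans (ciSup_le fun μ' => ?_)
    obtain ⟨μ', hμ'⟩ := μ'
    haveI := hprob μ' hμ'
    have hint : (∫ φ, ((φ : EuclideanSpace ℝ (Fin d)) ⬝ᵥ ((θ₀ : EuclideanSpace ℝ (Fin d)) : Fin d → ℝ)) ^ 2 ∂μ') ≤ 1 := by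
      have := integral_mono_of_nonneg (f := fun φ : EuclideanSpace ℝ (Fin d) =>
          ((φ : Fin d → ℝ) ⬝ᵥ ((θ₀ : EuclideanSpace ℝ (Fin d)) : Fin d → ℝ)) ^ 2)
          (g := fun _ => (1 : ℝ)) (μ := μ')
          (Filter.Eventually.of_forall fun φ => sq_nonneg _) (integrable_const 1) ?_
      · simpa using this
      · filter_upwards [rbu_ae_ball μ' (hsupp μ' hμ')] with φ hφ
        have habs := rbu_abs_dot_le φ (θ₀ : EuclideanSpace ℝ (Fin d))
        rw [θ₀.2] at habs
        have h2 : |(φ : Fin d → ℝ) ⬝ᵥ ((θ₀ : EuclideanSpace ℝ (Fin d)) : Fin d → ℝ)| ≤ 1 := by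
          nlinarith [norm_nonneg φ]
        calc ((φ : Fin d → ℝ) ⬝ᵥ ((θ₀ : EuclideanSpace ℝ (Fin d)) : Fin d → ℝ)) ^ 2
            = |(φ : Fin d → ℝ) ⬝ᵥ ((θ₀ : EuclideanSpace ℝ (Fin d)) : Fin d → ℝ)| ^ 2 := (sq_abs _).symm
          _ ≤ 1 := by nlinarith [abs_nonneg ((φ : Fin d → ℝ) ⬝ᵥ ((θ₀ : EuclideanSpace ℝ (Fin d)) : Fin d → ℝ))]
    calc Real.sqrt _ ≤ Real.sqrt 1 := Real.sqrt_le_sqrt hint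
      _ = 1 := Real.sqrt_one
  -- ε' ≤ 1/(2 √c)
  have hε'small : ε' * Real.sqrt c ≤ 1 / 2 := by
    have hν2 : ν ^ 2 ≤ 1 := by nlinarith
    rw [le_div_iff₀ (by positivity)] at hε'ν
    nlinarith
  -- key direction bound : every unit direction has quadratic form at least 3c
  have hAθ : ∀ θ : EuclideanSpace ℝ (Fin d), ‖θ‖ = 1 →
      3 * c ≤ (θ : Fin d → ℝ) ⬝ᵥ A.mulVec (θ : Fin d → ℝ) := by
    intro θ hθ
    set s : ℝ := (θ : Fin d → ℝ) ⬝ᵥ M₁.mulVec (θ : Fin d → ℝ) with hsdef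
    have hs0 : 0 ≤ s := by simpa using hM₁.posSemidef.dotProduct_mulVec_nonneg (θ : Fin d → ℝ)
    have hseq : s = c + (θ : Fin d → ℝ) ⬝ᵥ A.mulVec (θ : Fin d → ℝ) := by
      rw [hsdef, hM₁eq, rbu_quad_eq, rbu_dot_self, hθ]
      ring
    -- per-measure bound
    have hper : ∀ μ' ∈ P, (∫ φ, ((φ : EuclideanSpace ℝ (Fin d)) ⬝ᵥ (θ : Fin d → ℝ)) ^ 2 ∂μ')
        ≤ Real.sqrt s * ε' := by
      intro μ' hμ'
      haveI := hprob μ' hμ'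
      have hint : Integrable (fun φ : EuclideanSpace ℝ (Fin d) =>
          Real.sqrt ((φ : Fin d → ℝ) ⬝ᵥ M₁⁻¹.mulVec φ)) μ' := rbu_integrable _ μ' (hsupp μ' hμ')
      have step : (∫ φ, ((φ : EuclideanSpace ℝ (Fin d)) ⬝ᵥ (θ : Fin d → ℝ)) ^ 2 ∂μ')
          ≤ ∫ φ, Real.sqrt s * Real.sqrt ((φ : Fin d → ℝ) ⬝ᵥ M₁⁻¹.mulVec φ) ∂μ' := by
        apply integral_mono_of_nonneg (Filter.Eventually.of_forall fun φ => sq_nonneg _)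
          (hint.const_mul _)
        filter_upwards [rbu_ae_ball μ' (hsupp μ' hμ')] with φ hφ
        have hq : 0 ≤ (φ : Fin d → ℝ) ⬝ᵥ M₁⁻¹.mulVec φ := by
          simpa using hM₁.inv.posSemidef.dotProduct_mulVec_nonneg (φ : Fin d → ℝ)
        -- Cauchy-Schwarz with respect to M₁⁻¹
        have hCS := rbu_psd_CS hM₁.inv.posSemidef (φ : Fin d → ℝ) (M₁.mulVec (θ : Fin d → ℝ))
        rw [rbu_inv_apply' hM₁] at hCS
        have hsrw : (M₁.mulVec (θ : Fin d → ℝ)) ⬝ᵥ (θ : Fin d → ℝ) = s := by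
          rw [dotProduct_comm]
        rw [hsrw] at hCS
        -- hCS : (φ ⬝ᵥ θ)^2 ≤ (φ M₁⁻¹ φ) * s
        have habs1 : |(φ : Fin d → ℝ) ⬝ᵥ (θ : Fin d → ℝ)| ≤ 1 := by
          have := rbu_abs_dot_le φ θ
          rw [hθ] at this
          nlinarith [norm_nonneg φ]
        have habs2 : |(φ : Fin d → ℝ) ⬝ᵥ (θ : Fin d → ℝ)|
            ≤ Real.sqrt ((φ : Fin d → ℝ) ⬝ᵥ M₁⁻¹.mulVec φ) * Real.sqrt s := by
          rw [← Real.sqrt_sq_eq_abs, ← Real.sqrt_mul hq]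
          exact Real.sqrt_le_sqrt hCS
        calc ((φ : Fin d → ℝ) ⬝ᵥ (θ : Fin d → ℝ)) ^ 2
            = |(φ : Fin d → ℝ) ⬝ᵥ (θ : Fin d → ℝ)| ^ 2 := (sq_abs _).symm
          _ ≤ |(φ : Fin d → ℝ) ⬝ᵥ (θ : Fin d → ℝ)| := by
              nlinarith [abs_nonneg ((φ : Fin d → ℝ) ⬝ᵥ (θ : Fin d → ℝ))]
          _ ≤ Real.sqrt ((φ : Fin d → ℝ) ⬝ᵥ M₁⁻¹.mulVec φ) * Real.sqrt s := habs2
          _ = Real.sqrt s * Real.sqrt ((φ : Fin d → ℝ) ⬝ᵥ M₁⁻¹.mulVec φ) := mul_comm _ _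
      rw [integral_const_mul] at step
      refine step.trans ?_
      exact mul_le_mul_of_nonneg_left (hε' μ' hμ') (Real.sqrt_nonneg _)
    -- conclude ν² ≤ √s ε'
    have hν2 : ν ^ 2 ≤ Real.sqrt s * ε' := by
      have h1 : ν ≤ ⨆ μ : P, Real.sqrt (∫ φ, ((φ : EuclideanSpace ℝ (Fin d)) ⬝ᵥ (θ : Fin d → ℝ)) ^ 2
          ∂(μ : Measure (EuclideanSpace ℝ (Fin d)))) := hν ▸ ciInf_le hbdd ⟨θ, hθ⟩
      have h2 : ν ≤ Real.sqrt (Real.sqrt s * ε') := by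
        refine h1.trans (ciSup_le fun μ' => ?_)
        exact Real.sqrt_le_sqrt (hper μ' μ'.2)
      have h3 : ν ^ 2 ≤ Real.sqrt (Real.sqrt s * ε') ^ 2 := by
        exact pow_le_pow_left₀ hνnonneg h2 2
      rwa [Real.sq_sqrt (by positivity)] at h3
    -- combine with hε'ν to get 4c ≤ s
    have h4c : 4 * c ≤ s := by
      have hsq : 2 * Real.sqrt c ≤ Real.sqrt s := by
        have : ν ^ 2 ≤ Real.sqrt s * (ν ^ 2 / (2 * Real.sqrt c)) :=
          hν2.trans (mul_le_mul_of_nonneg_left hε'ν (Real.sqrt_nonneg _))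
        have hν2pos : 0 < ν ^ 2 := by positivity
        have h6 := mul_le_mul_of_nonneg_right this (by positivity : (0:ℝ) ≤ 2 * Real.sqrt c)
        have h7 : Real.sqrt s * (ν ^ 2 / (2 * Real.sqrt c)) * (2 * Real.sqrt c)
            = Real.sqrt s * ν ^ 2 := by
          field_simp
        rw [h7] at h6
        nlinarith [h6, hν2pos]
      have := pow_le_pow_left₀ (by positivity) hsq 2
      rw [Real.sq_sqrt hs0] at this
      have hcsq : Real.sqrt c ^ 2 = c := Real.sq_sqrt hc.le
      nlinarith
    linarith [hseq ▸ h4c]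
  -- quadratic form lower bound for every vector
  have hAquad : ∀ u : Fin d → ℝ, c * (u ⬝ᵥ u) ≤ u ⬝ᵥ A.mulVec u := by
    intro u
    by_cases hu : u = 0
    · simp [hu]
    · set x : EuclideanSpace ℝ (Fin d) := WithLp.toLp 2 u with hxdef
      have hx0 : x ≠ 0 := fun h => hu (by simpa [hxdef] using congrArg WithLp.ofLp h)
      set θ : EuclideanSpace ℝ (Fin d) := ‖x‖⁻¹ • x with hθdef
      have hθ : ‖θ‖ = 1 := by
        rw [hθdef, norm_smul]
        simp [norm_inv, inv_mul_cancel₀ (norm_ne_zero_iff.mpr hx0)]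
      have hbound := hAθ θ hθ
      have hθfun : (θ : Fin d → ℝ) = ‖x‖⁻¹ • u := rfl
      rw [hθfun] at hbound
      simp only [smul_dotProduct, dotProduct_smul, Matrix.mulVec_smul,
        smul_eq_mul] at hbound
      have hnx : 0 < ‖x‖ := norm_pos_iff.mpr hx0
      have hxdot : u ⬝ᵥ u = ‖x‖ ^ 2 := rbu_dot_self x
      set v : ℝ := ‖x‖⁻¹ with hvdef
      have hv : v * ‖x‖ = 1 := inv_mul_cancel₀ (norm_ne_zero_iff.mpr hx0)
      have h3 : 3 * c * ‖x‖ ^ 2 ≤ u ⬝ᵥ A.mulVec u := by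
        have h8 := mul_le_mul_of_nonneg_right hbound (sq_nonneg ‖x‖)
        have h9 : v * (v * (u ⬝ᵥ A.mulVec u)) * ‖x‖ ^ 2
            = (v * ‖x‖) * ((v * ‖x‖) * (u ⬝ᵥ A.mulVec u)) := by ring
        rw [h9, hv, one_mul, one_mul] at h8
        linarith
      rw [hxdot]
      nlinarith [h3, hc, sq_nonneg ‖x‖]
  -- now the main estimate
  intro n hn μ hμ
  haveI := hprob μ hμ
  have hn0 : (0:ℝ) ≤ n := by linarith
  set Mₙ : Matrix (Fin d) (Fin d) ℝ := c • (1 : Matrix (Fin d) (Fin d) ℝ) + n • A with hMₙdef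
  have hMₙ : Mₙ.PosDef := by rw [hMₙdef]; exact rbu_posdef hc hn0 hA
  clear_value Mₙ
  set k : ℝ := (1 + n) / 2 with hkdef
  have hk : 0 < k := by rw [hkdef]; linarith
  clear_value k
  have hkM₁eq : k • M₁ = (k * c) • (1 : Matrix (Fin d) (Fin d) ℝ) + k • A := by
    rw [hM₁def, smul_add, smul_smul]
  have hkM₁ : (k • M₁).PosDef := by
    rw [hkM₁eq]; exact rbu_posdef (by positivity) hk.le hA
  -- quadratic comparison k M₁ ≤ Mₙ
  have hcomp : ∀ u : Fin d → ℝ, u ⬝ᵥ (k • M₁).mulVec u ≤ u ⬝ᵥ Mₙ.mulVec u := by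
    intro u
    have h1 : u ⬝ᵥ (k • M₁).mulVec u = k * (c * (u ⬝ᵥ u) + 1 * (u ⬝ᵥ A.mulVec u)) := by
      rw [Matrix.smul_mulVec, dotProduct_smul, smul_eq_mul, hM₁eq, rbu_quad_eq]
    have h2 : u ⬝ᵥ Mₙ.mulVec u = c * (u ⬝ᵥ u) + n * (u ⬝ᵥ A.mulVec u) := by
      rw [hMₙdef]; exact rbu_quad_eq c n A u
    rw [h1, h2, hkdef]
    have hprod : 0 ≤ (n - 1) * ((u ⬝ᵥ A.mulVec u) - c * (u ⬝ᵥ u)) :=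
      mul_nonneg (by linarith) (by linarith [hAquad u])
    linarith only [hprod]
  -- pointwise comparison of the inverse quadratic forms
  have hptwise : ∀ φ : EuclideanSpace ℝ (Fin d),
      Real.sqrt ((φ : Fin d → ℝ) ⬝ᵥ Mₙ⁻¹.mulVec φ)
        ≤ Real.sqrt k⁻¹ * Real.sqrt ((φ : Fin d → ℝ) ⬝ᵥ M₁⁻¹.mulVec φ) := by
    intro φ
    have h1 := rbu_inv_quad_mono hkM₁ hMₙ hcomp (φ : Fin d → ℝ)
    haveI : Invertible k := invertibleOfNonzero hk.ne'
    have h2 : (k • M₁)⁻¹ = k⁻¹ • M₁⁻¹ := by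
      rw [← invOf_eq_inv k]
      exact Matrix.inv_smul (A := M₁) k (isUnit_iff_ne_zero.mpr hM₁.det_pos.ne')
    rw [h2] at h1
    have h3 : (φ : Fin d → ℝ) ⬝ᵥ (k⁻¹ • M₁⁻¹).mulVec φ
        = k⁻¹ * ((φ : Fin d → ℝ) ⬝ᵥ M₁⁻¹.mulVec φ) := by
      rw [Matrix.smul_mulVec, dotProduct_smul, smul_eq_mul]
    rw [h3] at h1
    calc Real.sqrt ((φ : Fin d → ℝ) ⬝ᵥ Mₙ⁻¹.mulVec φ)
        ≤ Real.sqrt (k⁻¹ * ((φ : Fin d → ℝ) ⬝ᵥ M₁⁻¹.mulVec φ)) := Real.sqrt_le_sqrt h1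
      _ = Real.sqrt k⁻¹ * Real.sqrt ((φ : Fin d → ℝ) ⬝ᵥ M₁⁻¹.mulVec φ) :=
          Real.sqrt_mul (by positivity) _
  -- integrate
  have hint₁ : Integrable (fun φ : EuclideanSpace ℝ (Fin d) =>
      Real.sqrt ((φ : Fin d → ℝ) ⬝ᵥ M₁⁻¹.mulVec φ)) μ := rbu_integrable _ μ (hsupp μ hμ)
  have hstep : (∫ φ, Real.sqrt ((φ : Fin d → ℝ) ⬝ᵥ Mₙ⁻¹.mulVec φ) ∂μ)
      ≤ Real.sqrt k⁻¹ * ∫ φ, Real.sqrt ((φ : Fin d → ℝ) ⬝ᵥ M₁⁻¹.mulVec φ) ∂μ := by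
    rw [← integral_const_mul]
    exact integral_mono_of_nonneg (Filter.Eventually.of_forall fun φ => Real.sqrt_nonneg _)
      (hint₁.const_mul _) (Filter.Eventually.of_forall hptwise)
  have hstep2 : (∫ φ, Real.sqrt ((φ : Fin d → ℝ) ⬝ᵥ Mₙ⁻¹.mulVec φ) ∂μ)
      ≤ Real.sqrt k⁻¹ * ε' := by
    refine hstep.trans ?_
    exact mul_le_mul_of_nonneg_left (hε' μ hμ) (Real.sqrt_nonneg _)
  refine hstep2.trans ?_
  -- final algebra : √(k⁻¹) ε' ≤ √(2 ε' / (√c (1+n)))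
  have hεsq : Real.sqrt k⁻¹ * ε' = Real.sqrt (k⁻¹ * ε' ^ 2) := by
    rw [Real.sqrt_mul (by positivity), Real.sqrt_sq hε'pos.le]
  rw [hεsq]
  apply Real.sqrt_le_sqrt
  have hkinv : k⁻¹ = 2 / (1 + n) := by rw [hkdef, inv_div]
  rw [hkinv]
  rw [div_mul_eq_mul_div, div_le_div_iff₀ (by linarith) (by positivity)]
  -- 2 ε'² (√c (1+n)) ≤ 2 ε' (1+n)
  have hkey : ε' * (ε' * Real.sqrt c) ≤ ε' * (1 / 2) :=
    mul_le_mul_of_nonneg_left hε'small hε'pos.le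
  have hfin := mul_le_mul_of_nonneg_right hkey (by linarith : (0:ℝ) ≤ 2 * (1 + n))
  linarith only [hfin, hε'pos.le, mul_nonneg hn0 hε'pos.le]
end
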